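/- arXiv:2002.09967 — 6 statements merged into one kernel-verified Lean document; each statement's English description precedes it below -/
import Mathlib

section
/- Let f ∈ L^1_γ(ℝ^d). Then sup_{R>0} R^{σ/(1−m)−(d−γ)} ∫_{{|x|≥R}} |f(x)| |x|^{−γ} dx < ∞ if and only if there exist constants C > 0 and R_0 > 0 such that ∫_{B_{|x|/2}(x)} |f(y)| |y|^{−γ} dy ≤ C |x|^{d−γ−σ/(1−m)} for every x ∈ ℝ^d with |x| ≥ R_0, where B_{|x|/2}(x) is the open Euclidean ball of radius |x|/2 centred at x. (Equivalence of the tail conditions (TC) and (TC').) -/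
open MeasureTheory Real Set Metric Filter Topology

section Aux
variable {E : Type*} [MeasurableSpace E] {μ : Measure E}

theorem my_setIntegral_le_sum {ι : Type*} (t : Finset ι) (u : ι → Set E)
    (hu : ∀ i ∈ t, MeasurableSet (u i)) {s : Set E} (hs : MeasurableSet s)
    (hsub : s ⊆ ⋃ i ∈ t, u i) {g : E → ℝ} (hg : Integrable g μ) (hg0 : ∀ y, 0 ≤ g y) :
    ∫ y in s, g y ∂μ ≤ ∑ i ∈ t, ∫ y in u i, g y ∂μ := by
  classical
  calc ∫ y in s, g y ∂μ = ∫ y, s.indicator g y ∂μ := (integral_indicator hs).symm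
    _ ≤ ∫ y, ∑ i ∈ t, (u i).indicator g y ∂μ := by
        apply integral_mono (hg.indicator hs)
        · exact integrable_finset_sum t fun i hi => hg.indicator (hu i hi)
        · intro y
          by_cases hy : y ∈ s
          · obtain ⟨i, hi, hyi⟩ := by simpa using hsub hy
            rw [Set.indicator_of_mem hy]
            calc g y = (u i).indicator g y := (Set.indicator_of_mem hyi g).symm
              _ ≤ ∑ j ∈ t, (u j).indicator g y :=
                Finset.single_le_sum (fun j _ => Set.indicator_nonneg (fun z _ => hg0 z) y) hi
          · rw [Set.indicator_of_notMem hy]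
            exact Finset.sum_nonneg fun j _ => Set.indicator_nonneg (fun z _ => hg0 z) y
    _ = ∑ i ∈ t, ∫ y in u i, g y ∂μ := by
        rw [integral_finset_sum t fun i hi => hg.indicator (hu i hi)]
        exact Finset.sum_congr rfl fun i hi => integral_indicator (hu i hi)

theorem my_setIntegral_union_le {s₁ s₂ s : Set E} (h1 : MeasurableSet s₁)
    (h2 : MeasurableSet s₂) (hs : MeasurableSet s) (hsub : s ⊆ s₁ ∪ s₂)
    {g : E → ℝ} (hg : Integrable g μ) (hg0 : ∀ y, 0 ≤ g y) :
    ∫ y in s, g y ∂μ ≤ (∫ y in s₁, g y ∂μ) + ∫ y in s₂, g y ∂μ := by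
  calc ∫ y in s, g y ∂μ = ∫ y, s.indicator g y ∂μ := (integral_indicator hs).symm
    _ ≤ ∫ y, (s₁.indicator g y + s₂.indicator g y) ∂μ := by
        apply integral_mono (hg.indicator hs) ((hg.indicator h1).add (hg.indicator h2))
        intro y
        simp only [Pi.add_apply]
        have n1 : 0 ≤ s₁.indicator g y := Set.indicator_nonneg (fun z _ => hg0 z) y
        have n2 : 0 ≤ s₂.indicator g y := Set.indicator_nonneg (fun z _ => hg0 z) y
        by_cases hy : y ∈ s
        · rw [Set.indicator_of_mem hy]
          rcases hsub hy with h | h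
          · rw [Set.indicator_of_mem h]; linarith
          · rw [Set.indicator_of_mem h]; linarith
        · rw [Set.indicator_of_notMem hy]; linarith
    _ = (∫ y in s₁, g y ∂μ) + ∫ y in s₂, g y ∂μ := by
        rw [integral_add (hg.indicator h1) (hg.indicator h2),
          integral_indicator h1, integral_indicator h2]

theorem my_tail_tendsto_zero [NormedAddCommGroup E]
    [OpensMeasurableSpace E] {g : E → ℝ} (hg : Integrable g μ)
    {R : ℝ} (hR : 0 < R) :
    Tendsto (fun n : ℕ => ∫ y in {y : E | R * 2^n ≤ ‖y‖}, g y ∂μ) atTop (𝓝 0) := by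
  have hset : ∀ n : ℕ, {y : E | R * 2^n ≤ ‖y‖} = (ball (0:E) (R * 2^n))ᶜ := by
    intro n; ext y; simp [mem_ball, dist_zero_right, not_lt]
  have hmeas : ∀ n : ℕ, MeasurableSet (ball (0:E) (R * 2^n)) := fun n => measurableSet_ball
  have hmono : Monotone (fun n : ℕ => ball (0:E) (R * 2^n)) := by
    intro a b hab
    exact ball_subset_ball (by
      have : (2:ℝ)^a ≤ 2^b := pow_le_pow_right₀ one_le_two hab
      nlinarith)
  have hunion : (⋃ n : ℕ, ball (0:E) (R * 2^n)) = univ := by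
    ext y
    simp only [mem_iUnion, mem_univ, iff_true, mem_ball, dist_zero_right]
    obtain ⟨n, hn⟩ := exists_nat_gt (‖y‖ / R)
    refine ⟨n, ?_⟩
    have h2 : (n:ℝ) < 2^n := by exact_mod_cast Nat.lt_two_pow_self (n := n)
    have : ‖y‖ / R < 2^n := lt_trans hn h2
    calc ‖y‖ = (‖y‖ / R) * R := by field_simp
      _ < 2^n * R := by nlinarith
      _ = R * 2^n := by ring
  have htendsto : Tendsto (fun n : ℕ => ∫ y in ball (0:E) (R * 2^n), g y ∂μ) atTop
      (𝓝 (∫ y, g y ∂μ)) := by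
    have := tendsto_setIntegral_of_monotone hmeas hmono
      (by rw [hunion]; exact hg.integrableOn)
    rwa [hunion, setIntegral_univ] at this
  have key : ∀ n : ℕ, ∫ y in {y : E | R * 2^n ≤ ‖y‖}, g y ∂μ
      = (∫ y, g y ∂μ) - ∫ y in ball (0:E) (R * 2^n), g y ∂μ := by
    intro n
    rw [hset n, eq_sub_iff_add_eq, add_comm]
    exact integral_add_compl (hmeas n) hg
  simp only [key]
  have : Tendsto (fun n : ℕ => (∫ y, g y ∂μ) - ∫ y in ball (0:E) (R * 2^n), g y ∂μ) atTop
      (𝓝 ((∫ y, g y ∂μ) - ∫ y, g y ∂μ)) := tendsto_const_nhds.sub htendsto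
  simpa using this

end Aux

theorem my_annulus_cover (d : ℕ) :
    ∃ t : Finset (EuclideanSpace ℝ (Fin d)), (∀ x ∈ t, ‖x‖ = 3/2) ∧
      {y : EuclideanSpace ℝ (Fin d) | 1 ≤ ‖y‖ ∧ ‖y‖ ≤ 2} ⊆ ⋃ x ∈ t, ball x (3/4) := by
  classical
  set A : Set (EuclideanSpace ℝ (Fin d)) := {y | 1 ≤ ‖y‖ ∧ ‖y‖ ≤ 2}
  have hA : IsCompact A := by
    have h1 : A = (Metric.closedBall (0:EuclideanSpace ℝ (Fin d)) 2) \
        (Metric.ball 0 1) := by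
      ext y
      simp [A, mem_closedBall, mem_ball, dist_zero_right, and_comm, not_lt]
    have : IsClosed A := by
      rw [h1]; exact (Metric.isClosed_closedBall).sdiff Metric.isOpen_ball
    apply Metric.isCompact_of_isClosed_isBounded this
    rw [h1]
    exact (Metric.isBounded_closedBall).subset diff_subset
  set Sp : Set (EuclideanSpace ℝ (Fin d)) := {x | ‖x‖ = 3/2}
  have hcov : A ⊆ ⋃ x : Sp, ball (x : EuclideanSpace ℝ (Fin d)) (3/4) := by
    intro y hy
    have hy1 : (1:ℝ) ≤ ‖y‖ := hy.1
    have hy0 : (0:ℝ) < ‖y‖ := lt_of_lt_of_le one_pos hy1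
    set x : EuclideanSpace ℝ (Fin d) := (3/(2*‖y‖)) • y with hx
    have hxn : ‖x‖ = 3/2 := by
      rw [hx, norm_smul, Real.norm_eq_abs, abs_of_pos (by positivity)]
      field_simp
    refine Set.mem_iUnion.2 ⟨⟨x, hxn⟩, ?_⟩
    have hyx_eq : y - x = (1 - 3/(2*‖y‖)) • y := by
      rw [hx, sub_smul, one_smul]
    have h3 : (1 - 3/(2*‖y‖)) * ‖y‖ = ‖y‖ - 3/2 := by field_simp
    have hnorm : ‖y - x‖ = |‖y‖ - 3/2| := by
      calc ‖y - x‖ = |1 - 3/(2*‖y‖)| * ‖y‖ := by rw [hyx_eq, norm_smul, Real.norm_eq_abs]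
        _ = |(1 - 3/(2*‖y‖)) * ‖y‖| := by rw [abs_mul, abs_of_pos hy0]
        _ = |‖y‖ - 3/2| := by rw [h3]
    rw [mem_ball, dist_eq_norm, hnorm, abs_sub_lt_iff]
    constructor <;> linarith [hy.1, hy.2]
  obtain ⟨t, ht⟩ := hA.elim_finite_subcover
    (fun x : Sp => ball (x : EuclideanSpace ℝ (Fin d)) (3/4)) (fun x => isOpen_ball) hcov
  refine ⟨t.image (fun x : Sp => (x : EuclideanSpace ℝ (Fin d))), ?_, ?_⟩
  · intro x hx
    obtain ⟨⟨x', hx'⟩, _, rfl⟩ := Finset.mem_image.1 hx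
    exact hx'
  · intro y hy
    obtain ⟨x, hxt, hyx⟩ := Set.mem_iUnion₂.1 (ht hy)
    exact Set.mem_biUnion (Finset.mem_image_of_mem _ hxt) hyx

/-- The weighted tail integral `∫_{|x| ≥ R} |f(x)| |x|^{-γ} dx`. -/
noncomputable def weightedTail (d : ℕ) (γ : ℝ) (f : EuclideanSpace ℝ (Fin d) → ℝ) (R : ℝ) : ℝ :=
  ∫ x in {x : EuclideanSpace ℝ (Fin d) | R ≤ ‖x‖}, |f x| * ‖x‖ ^ (-γ)

set_option maxHeartbeats 1000000 in
/-- Equivalence of the tail conditions (TC) and (TC'). -/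
theorem tail_conditions_equivalent
    (d : ℕ) (hd : 3 ≤ d) (γ β m : ℝ)
    (hγ : γ < d) (hβ1 : γ - 2 < β) (hβ2 : β ≤ γ * ((d : ℝ) - 2) / d)
    (hm1 : ((d : ℝ) - 2 - β) / ((d : ℝ) - γ) < m) (hm2 : m < 1)
    (f : EuclideanSpace ℝ (Fin d) → ℝ)
    (hf : Integrable (fun x : EuclideanSpace ℝ (Fin d) => |f x| * ‖x‖ ^ (-γ))) :
    BddAbove {y : ℝ | ∃ R : ℝ, 0 < R ∧
        y = R ^ ((2 + β - γ) / (1 - m) - ((d : ℝ) - γ)) * weightedTail d γ f R}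
      ↔ ∃ C > (0 : ℝ), ∃ R₀ > (0 : ℝ), ∀ x : EuclideanSpace ℝ (Fin d), R₀ ≤ ‖x‖ →
          (∫ y in Metric.ball x (‖x‖ / 2), |f y| * ‖y‖ ^ (-γ)) ≤
            C * ‖x‖ ^ ((d : ℝ) - γ - (2 + β - γ) / (1 - m)) := by
  classical
  set g : EuclideanSpace ℝ (Fin d) → ℝ := fun y => |f y| * ‖y‖ ^ (-γ) with hgdef
  have hg0 : ∀ y, 0 ≤ g y := fun y => mul_nonneg (abs_nonneg _) (rpow_nonneg (norm_nonneg y) _)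
  set α : ℝ := (2 + β - γ) / (1 - m) - ((d : ℝ) - γ) with hαdef
  have h1m : (0:ℝ) < 1 - m := by linarith
  have hd3 : (3:ℝ) ≤ (d:ℝ) := by exact_mod_cast hd
  have hdγ : (0:ℝ) < (d:ℝ) - γ := by linarith
  have hm1' : (d:ℝ) - 2 - β < m * ((d:ℝ) - γ) := by
    have := (div_lt_iff₀ hdγ).1 hm1; linarith
  have hα : 0 < α := by
    rw [hαdef, sub_pos, lt_div_iff₀ h1m]
    nlinarith
  have hexp : (d:ℝ) - γ - (2 + β - γ) / (1 - m) = -α := by rw [hαdef]; ring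
  have hgT : ∀ R : ℝ, weightedTail d γ f R = ∫ y in {y : EuclideanSpace ℝ (Fin d) | R ≤ ‖y‖}, g y := fun R => rfl
  have hmeas_tail : ∀ R : ℝ, MeasurableSet {y : EuclideanSpace ℝ (Fin d) | R ≤ ‖y‖} := fun R =>
    measurableSet_le measurable_const continuous_norm.measurable
  have hT_nonneg : ∀ R : ℝ, 0 ≤ weightedTail d γ f R := fun R =>
    setIntegral_nonneg (hmeas_tail R) (fun y _ => hg0 y)
  have hT_le : ∀ R : ℝ, weightedTail d γ f R ≤ ∫ y, g y := fun R =>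
    setIntegral_le_integral hf (Eventually.of_forall hg0)
  constructor
  · rintro ⟨M, hM⟩
    have hM1 : weightedTail d γ f 1 ≤ M := by
      have := hM ⟨1, one_pos, rfl⟩
      rwa [Real.one_rpow, one_mul] at this
    have hM0 : 0 ≤ M := le_trans (hT_nonneg 1) hM1
    have h2α : (0:ℝ) < (2:ℝ) ^ α := rpow_pos_of_pos two_pos α
    refine ⟨M * 2 ^ α + 1, by positivity, 1, one_pos, ?_⟩
    intro x hx
    have hxpos : (0:ℝ) < ‖x‖ := lt_of_lt_of_le one_pos hx
    have hhalf : (0:ℝ) < ‖x‖ / 2 := by positivity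
    have hsub : Metric.ball x (‖x‖/2) ⊆ {y : EuclideanSpace ℝ (Fin d) | ‖x‖/2 ≤ ‖y‖} := by
      intro y hy
      have h1 : ‖x - y‖ < ‖x‖/2 := by
        rw [← dist_eq_norm, dist_comm]; exact mem_ball.1 hy
      have h2 : ‖x‖ - ‖y‖ ≤ ‖x - y‖ := norm_sub_norm_le x y
      have : ‖x‖/2 ≤ ‖y‖ := by linarith
      exact this
    have step1 : (∫ y in Metric.ball x (‖x‖/2), g y) ≤ weightedTail d γ f (‖x‖/2) := by
      rw [hgT]
      exact setIntegral_mono_set hf.integrableOn (Eventually.of_forall hg0)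
        (HasSubset.Subset.eventuallyLE hsub)
    have step2 : weightedTail d γ f (‖x‖/2) ≤ M * (‖x‖/2) ^ (-α) := by
      have h := hM ⟨‖x‖/2, hhalf, rfl⟩
      have hp : (0:ℝ) < (‖x‖/2) ^ α := rpow_pos_of_pos hhalf α
      rw [Real.rpow_neg hhalf.le, mul_comm M, ← div_eq_inv_mul, le_div_iff₀ hp]
      linarith [h]
    have step3 : (‖x‖/2 : ℝ) ^ (-α) = ‖x‖ ^ (-α) * 2 ^ α := by
      rw [Real.div_rpow (norm_nonneg x) (by norm_num : (0:ℝ) ≤ 2),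
        Real.rpow_neg (by norm_num : (0:ℝ) ≤ 2)]
      rw [div_inv_eq_mul]
    rw [hexp]
    have hxα : (0:ℝ) ≤ ‖x‖ ^ (-α) := rpow_nonneg (norm_nonneg x) _
    calc (∫ y in Metric.ball x (‖x‖/2), g y) ≤ M * ((‖x‖ ^ (-α)) * 2 ^ α) := by
          rw [← step3]; exact le_trans step1 step2
      _ = (M * 2 ^ α) * ‖x‖ ^ (-α) := by ring
      _ ≤ (M * 2 ^ α + 1) * ‖x‖ ^ (-α) := by nlinarith
  · rintro ⟨C, hC, R₀, hR₀, hball⟩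
    simp only [hexp] at hball
    obtain ⟨t, ht32, hcover⟩ := my_annulus_cover d
    set B : ℝ := (t.card : ℝ) * C * (3/2 : ℝ) ^ (-α) with hBdef
    have hB0 : 0 ≤ B :=
      mul_nonneg (mul_nonneg (Nat.cast_nonneg _) hC.le) (rpow_nonneg (by norm_num) _)
    set q : ℝ := (2:ℝ) ^ (-α) with hqdef
    have hq0 : 0 < q := rpow_pos_of_pos two_pos _
    have hq1 : q < 1 := by
      rw [hqdef]
      exact Real.rpow_lt_one_of_one_lt_of_neg one_lt_two (by linarith)
    have hqinv0 : (0:ℝ) ≤ (1 - q)⁻¹ := by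
      have : (0:ℝ) < 1 - q := by linarith
      positivity
    -- norm of scaled centers
    have hpow1 : ∀ k : ℕ, (1:ℝ) ≤ 2 ^ k := fun k => by
      exact_mod_cast Nat.one_le_two_pow
    have hrx_norm : ∀ (r : ℝ), 0 < r → ∀ x ∈ t, ‖r • x‖ = 3/2 * r := by
      intro r hr x hx
      rw [norm_smul, Real.norm_eq_abs, abs_of_pos hr, ht32 x hx]
      ring
    -- annulus bound
    have hann : ∀ r : ℝ, R₀ ≤ r →
        (∫ y in {y : EuclideanSpace ℝ (Fin d) | r ≤ ‖y‖ ∧ ‖y‖ ≤ 2*r}, g y) ≤ B * r ^ (-α) := by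
      intro r hr
      have hrpos : 0 < r := lt_of_lt_of_le hR₀ hr
      have hsub : {y : EuclideanSpace ℝ (Fin d) | r ≤ ‖y‖ ∧ ‖y‖ ≤ 2*r} ⊆
          ⋃ x ∈ t, Metric.ball (r • x) (‖r • x‖ / 2) := by
        intro y hy
        have h1 : r⁻¹ • y ∈ {y : EuclideanSpace ℝ (Fin d) | 1 ≤ ‖y‖ ∧ ‖y‖ ≤ 2} := by
          constructor <;>
          · rw [norm_smul, Real.norm_eq_abs, abs_of_pos (inv_pos.2 hrpos)]
            rw [inv_mul_eq_div]
            first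
              | (rw [le_div_iff₀ hrpos]; linarith [hy.1])
              | (rw [div_le_iff₀ hrpos]; linarith [hy.2])
        obtain ⟨x, hxt, hyx⟩ := Set.mem_iUnion₂.1 (hcover h1)
        refine Set.mem_biUnion hxt ?_
        have hrx : ‖r • x‖ = 3/2 * r := hrx_norm r hrpos x hxt
        have heq : y - r • x = r • (r⁻¹ • y - x) := by
          rw [smul_sub, smul_smul, mul_inv_cancel₀ hrpos.ne', one_smul]
        have hdist : ‖r⁻¹ • y - x‖ < 3/4 := by
          rw [← dist_eq_norm]; exact mem_ball.1 hyx
        rw [mem_ball, dist_eq_norm, heq, norm_smul, Real.norm_eq_abs, abs_of_pos hrpos, hrx]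
        nlinarith
      have hmeasann : MeasurableSet {y : EuclideanSpace ℝ (Fin d) | r ≤ ‖y‖ ∧ ‖y‖ ≤ 2*r} :=
        (measurableSet_le measurable_const continuous_norm.measurable).inter
          (measurableSet_le continuous_norm.measurable measurable_const)
      calc (∫ y in {y : EuclideanSpace ℝ (Fin d) | r ≤ ‖y‖ ∧ ‖y‖ ≤ 2*r}, g y)
          ≤ ∑ x ∈ t, ∫ y in Metric.ball (r • x) (‖r • x‖ / 2), g y :=
            my_setIntegral_le_sum t _ (fun i _ => measurableSet_ball) hmeasann hsub hf hg0
        _ ≤ ∑ x ∈ t, C * (3/2 * r) ^ (-α) := by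
            apply Finset.sum_le_sum
            intro x hx
            have hrx : ‖r • x‖ = 3/2 * r := hrx_norm r hrpos x hx
            have hb := hball (r • x) (by rw [hrx]; nlinarith)
            rw [hrx] at hb ⊢
            exact hb
        _ = (t.card : ℝ) * (C * (3/2 * r) ^ (-α)) := by
            rw [Finset.sum_const, nsmul_eq_mul]
        _ = B * r ^ (-α) := by
            rw [Real.mul_rpow (by norm_num) hrpos.le, hBdef]; ring
    -- splitting step
    have hsplit : ∀ R : ℝ, 0 < R → weightedTail d γ f R ≤
        (∫ y in {y : EuclideanSpace ℝ (Fin d) | R ≤ ‖y‖ ∧ ‖y‖ ≤ 2*R}, g y) +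
          weightedTail d γ f (2*R) := by
      intro R hR
      rw [hgT, hgT]
      apply my_setIntegral_union_le
        ((measurableSet_le measurable_const continuous_norm.measurable).inter
          (measurableSet_le continuous_norm.measurable measurable_const))
        (hmeas_tail _) (hmeas_tail _) ?_ hf hg0
      intro y hy
      by_cases h : ‖y‖ ≤ 2*R
      · exact Or.inl ⟨hy, h⟩
      · exact Or.inr (le_of_not_ge h)
    -- iteration
    have hiter : ∀ (R : ℝ), R₀ ≤ R → ∀ n : ℕ, weightedTail d γ f R ≤
        B * R ^ (-α) * ∑ k ∈ Finset.range n, q ^ k + weightedTail d γ f (2^n * R) := by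
      intro R hR n
      have hRpos : 0 < R := lt_of_lt_of_le hR₀ hR
      induction n with
      | zero => simp
      | succ n ih =>
        have h2n : (1:ℝ) ≤ 2^n := hpow1 n
        have hRn : R₀ ≤ 2^n * R := le_trans hR (by nlinarith)
        have hpos : (0:ℝ) < 2^n * R := by positivity
        have h1 := hsplit (2^n * R) hpos
        have h2 := hann (2^n * R) hRn
        have hsc : ((2:ℝ)^n * R) ^ (-α) = q^n * R^(-α) := by
          rw [hqdef]
          calc ((2:ℝ)^n * R) ^ (-α) = ((2:ℝ)^(n:ℝ) * R)^(-α) := by rw [Real.rpow_natCast]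
            _ = ((2:ℝ)^(n:ℝ))^(-α) * R^(-α) := Real.mul_rpow (by positivity) hRpos.le
            _ = (2:ℝ)^((n:ℝ)*(-α)) * R^(-α) := by rw [← Real.rpow_mul (by norm_num)]
            _ = ((2:ℝ)^(-α))^(n:ℝ) * R^(-α) := by
                rw [mul_comm (n:ℝ), Real.rpow_mul (by norm_num : (0:ℝ) ≤ 2)]
            _ = ((2:ℝ)^(-α))^n * R^(-α) := by rw [Real.rpow_natCast]
        have h2R : (2:ℝ) * (2^n * R) = 2^(n+1) * R := by ring
        rw [Finset.sum_range_succ]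
        have h2' : (∫ y in {y : EuclideanSpace ℝ (Fin d) | 2^n * R ≤ ‖y‖ ∧ ‖y‖ ≤ 2*(2^n * R)}, g y)
            ≤ B * R ^ (-α) * q^n := by
          calc _ ≤ B * ((2:ℝ)^n * R) ^ (-α) := h2
            _ = B * R ^ (-α) * q^n := by rw [hsc]; ring
        calc weightedTail d γ f R
            ≤ B * R ^ (-α) * ∑ k ∈ Finset.range n, q ^ k + weightedTail d γ f (2^n * R) := ih
          _ ≤ B * R ^ (-α) * ∑ k ∈ Finset.range n, q ^ k +
              ((∫ y in {y : EuclideanSpace ℝ (Fin d) | 2^n * R ≤ ‖y‖ ∧ ‖y‖ ≤ 2*(2^n * R)}, g y) +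
                weightedTail d γ f (2*(2^n * R))) := by linarith
          _ ≤ B * R ^ (-α) * (∑ k ∈ Finset.range n, q ^ k + q^n) +
              weightedTail d γ f (2*(2^n * R)) := by
            rw [mul_add]; linarith
          _ = B * R ^ (-α) * (∑ k ∈ Finset.range n, q ^ k + q^n) +
              weightedTail d γ f (2^(n+1) * R) := by rw [h2R]
    -- geometric sum bound
    have hgeom : ∀ n : ℕ, ∑ k ∈ Finset.range n, q ^ k ≤ (1 - q)⁻¹ := by
      intro n
      have := (summable_geometric_of_lt_one hq0.le hq1).sum_le_tsum (Finset.range n)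
        (fun i _ => pow_nonneg hq0.le i)
      rwa [tsum_geometric_of_lt_one hq0.le hq1] at this
    -- tail bound for R ≥ R₀
    have hT : ∀ R : ℝ, R₀ ≤ R → weightedTail d γ f R ≤ (B * (1 - q)⁻¹) * R ^ (-α) := by
      intro R hR
      have hRpos : 0 < R := lt_of_lt_of_le hR₀ hR
      have hRα : (0:ℝ) ≤ B * R ^ (-α) := mul_nonneg hB0 (rpow_nonneg hRpos.le _)
      have hlim' : Tendsto (fun n : ℕ => weightedTail d γ f (2^n * R)) atTop (𝓝 0) := by
        have heqfun : (fun n : ℕ => weightedTail d γ f (2^n * R)) =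
            fun n : ℕ => ∫ y in {y : EuclideanSpace ℝ (Fin d) | R * 2^n ≤ ‖y‖}, g y := by
          funext n
          rw [hgT]
          congr 1
          ext y
          simp [mul_comm]
        rw [heqfun]
        exact my_tail_tendsto_zero hf hRpos
      have hfinal : Tendsto (fun n : ℕ => B * R ^ (-α) * (1 - q)⁻¹ +
          weightedTail d γ f (2^n * R)) atTop (𝓝 (B * R ^ (-α) * (1 - q)⁻¹ + 0)) :=
        tendsto_const_nhds.add hlim'
      have hle := ge_of_tendsto hfinal (Eventually.of_forall fun n => by
        calc weightedTail d γ f R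
            ≤ B * R ^ (-α) * ∑ k ∈ Finset.range n, q ^ k + weightedTail d γ f (2^n * R) :=
              hiter R hR n
          _ ≤ B * R ^ (-α) * (1 - q)⁻¹ + weightedTail d γ f (2^n * R) := by
              have := mul_le_mul_of_nonneg_left (hgeom n) hRα
              linarith)
      calc weightedTail d γ f R ≤ B * R ^ (-α) * (1 - q)⁻¹ + 0 := hle
        _ = (B * (1 - q)⁻¹) * R ^ (-α) := by ring
    -- conclude BddAbove
    refine ⟨max ((R₀ ^ α) * ∫ y, g y) (B * (1 - q)⁻¹), ?_⟩
    rintro y ⟨R, hRpos, rfl⟩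
    rcases le_total R R₀ with h | h
    · have h1 : R ^ α ≤ R₀ ^ α := Real.rpow_le_rpow hRpos.le h hα.le
      have h2 := hT_le R
      have h3 : R ^ α * weightedTail d γ f R ≤ R₀ ^ α * ∫ y, g y :=
        mul_le_mul h1 h2 (hT_nonneg R) (rpow_nonneg hR₀.le α)
      exact le_trans h3 (le_max_left _ _)
    · have h1 := hT R h
      have h2 : R ^ α * weightedTail d γ f R ≤ R ^ α * ((B * (1 - q)⁻¹) * R^(-α)) :=
        mul_le_mul_of_nonneg_left h1 (rpow_nonneg hRpos.le α)
      have h3 : R ^ α * ((B * (1 - q)⁻¹) * R^(-α)) = B * (1 - q)⁻¹ := by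
        rw [mul_comm (R ^ α), mul_assoc, ← Real.rpow_add hRpos]
        norm_num
      exact le_trans (h3 ▸ h2) (le_max_right _ _)
end

section
/- Compactly supported functions are not dense in (X, ‖·‖_X): there exist f ∈ X and δ > 0 such that ‖f − g‖_X ≥ δ for every g ∈ X that vanishes almost everywhere outside some compact subset of ℝ^d. -/
open MeasureTheory Real

/-- The set of values whose supremum is the norm `‖f‖_X`. -/
def XnormSet (d : ℕ) (γ e : ℝ) (f : EuclideanSpace ℝ (Fin d) → ℝ) : Set ℝ :=
  {y : ℝ | ∃ R : ℝ, 0 < R ∧ y = (max 1 R) ^ e * weightedTail d γ f R}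

/-- The norm `‖f‖_X = sup_{R>0} (max{1,R})^e ∫_{|x|≥R} |f| |x|^{-γ}`. -/
noncomputable def Xnorm (d : ℕ) (γ e : ℝ) (f : EuclideanSpace ℝ (Fin d) → ℝ) : ℝ :=
  sSup (XnormSet d γ e f)

/-- Membership in the tail space `X`. -/
def MemX (d : ℕ) (γ e : ℝ) (f : EuclideanSpace ℝ (Fin d) → ℝ) : Prop :=
  Integrable (fun x : EuclideanSpace ℝ (Fin d) => |f x| * ‖x‖ ^ (-γ)) ∧
    BddAbove (XnormSet d γ e f)



open MeasureTheory Real Set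

namespace NotDenseAux

variable {d : ℕ}

lemma measurableSet_S (d : ℕ) (R : ℝ) :
    MeasurableSet {x : EuclideanSpace ℝ (Fin d) | R ≤ ‖x‖} :=
  measurableSet_le measurable_const measurable_norm

/-- The model integrand. -/
noncomputable def G (d : ℕ) (s : ℝ) : EuclideanSpace ℝ (Fin d) → ℝ :=
  Set.indicator {x : EuclideanSpace ℝ (Fin d) | 1 ≤ ‖x‖} (fun x => ‖x‖ ^ (-s))

lemma G_integrable (s : ℝ) (hs : (d : ℝ) < s) : Integrable (G d s) := by
  have hmeas : AEStronglyMeasurable (G d s) volume :=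
    (((by fun_prop : Measurable fun x : EuclideanSpace ℝ (Fin d) => ‖x‖ ^ (-s))).indicator (measurableSet_S d 1)).aestronglyMeasurable
  have hint : Integrable (fun x : EuclideanSpace ℝ (Fin d) => (2:ℝ)^s * (1 + ‖x‖) ^ (-s)) volume := by
    refine Integrable.const_mul ?_ _
    apply integrable_one_add_norm (μ := volume)
    rwa [finrank_euclideanSpace_fin]
  refine hint.mono hmeas ?_
  filter_upwards with x
  by_cases hx : (1:ℝ) ≤ ‖x‖
  · have hx0 : (0:ℝ) < ‖x‖ := lt_of_lt_of_le one_pos hx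
    have h1 : ((2:ℝ) * ‖x‖) ^ (-s) ≤ (1 + ‖x‖) ^ (-s) := by
      apply Real.rpow_le_rpow_of_nonpos (by positivity) (by linarith) (by linarith)
    have h2 : ((2:ℝ) * ‖x‖) ^ (-s) = (2:ℝ)^(-s) * ‖x‖ ^ (-s) :=
      Real.mul_rpow (by norm_num) (norm_nonneg x)
    have h3 : ‖x‖ ^ (-s) ≤ (2:ℝ)^s * (1 + ‖x‖)^(-s) := by
      have := mul_le_mul_of_nonneg_left h1 (le_of_lt (Real.rpow_pos_of_pos two_pos s))
      rw [h2] at this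
      calc ‖x‖ ^ (-s) = (2:ℝ)^s * ((2:ℝ)^(-s) * ‖x‖^(-s)) := by
            rw [← mul_assoc, ← Real.rpow_add two_pos]
            simp
        _ ≤ (2:ℝ)^s * (1 + ‖x‖)^(-s) := this
    rw [G, Set.indicator_of_mem (show x ∈ {x : EuclideanSpace ℝ (Fin d) | 1 ≤ ‖x‖} from hx)]
    rw [Real.norm_eq_abs, abs_of_nonneg (Real.rpow_nonneg (norm_nonneg x) _),
      Real.norm_eq_abs, abs_of_nonneg (by positivity)]
    exact h3
  · rw [G, Set.indicator_of_notMem (show x ∉ {x : EuclideanSpace ℝ (Fin d) | 1 ≤ ‖x‖} from hx)]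
    simp only [norm_zero]
    positivity

lemma G_scaling (s : ℝ) {R : ℝ} (hR : 0 < R) :
    (∫ x : EuclideanSpace ℝ (Fin d),
        Set.indicator {x : EuclideanSpace ℝ (Fin d) | R ≤ ‖x‖} (fun x => ‖x‖ ^ (-s)) x)
      = R ^ ((d : ℝ) - s) * ∫ x, G d s x := by
  have key : ∀ x : EuclideanSpace ℝ (Fin d),
      Set.indicator {x : EuclideanSpace ℝ (Fin d) | R ≤ ‖x‖} (fun x => ‖x‖ ^ (-s)) x
        = R ^ (-s) * G d s (R⁻¹ • x) := by
    intro x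
    have hnorm : ‖R⁻¹ • x‖ = R⁻¹ * ‖x‖ := by
      rw [norm_smul, Real.norm_eq_abs, abs_of_pos (inv_pos.mpr hR)]
    have hmem : (1:ℝ) ≤ ‖R⁻¹ • x‖ ↔ R ≤ ‖x‖ := by
      rw [hnorm, le_inv_mul_iff₀ hR, mul_one]
    by_cases hx : R ≤ ‖x‖
    · rw [Set.indicator_of_mem (show x ∈ {x : EuclideanSpace ℝ (Fin d) | R ≤ ‖x‖} from hx), G,
        Set.indicator_of_mem (show R⁻¹ • x ∈ {x : EuclideanSpace ℝ (Fin d) | 1 ≤ ‖x‖} from hmem.mpr hx), hnorm,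
        Real.mul_rpow (le_of_lt (inv_pos.mpr hR)) (norm_nonneg x),
        ← Real.rpow_neg_one R, ← Real.rpow_mul hR.le, ← mul_assoc, ← Real.rpow_add hR]
      norm_num
    · rw [Set.indicator_of_notMem (show x ∉ {x : EuclideanSpace ℝ (Fin d) | R ≤ ‖x‖} from hx), G,
        Set.indicator_of_notMem (show R⁻¹ • x ∉ {x : EuclideanSpace ℝ (Fin d) | 1 ≤ ‖x‖} from fun h => hx (hmem.mp h)),
        mul_zero]
  simp_rw [key]
  rw [integral_const_mul, MeasureTheory.Measure.integral_comp_inv_smul_of_nonneg volume (G d s) hR.le,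
    finrank_euclideanSpace_fin, smul_eq_mul, ← mul_assoc, ← Real.rpow_natCast R d,
    ← Real.rpow_add hR]
  ring_nf


lemma G_pos (s : ℝ) (hd : 0 < d) (hs : (d : ℝ) < s) : 0 < ∫ x, G d s x := by
  haveI : Nonempty (Fin d) := ⟨⟨0, hd⟩⟩
  rw [G, integral_indicator (measurableSet_S d 1)]
  rw [setIntegral_pos_iff_support_of_nonneg_ae]
  · have hsub : {x : EuclideanSpace ℝ (Fin d) | 1 ≤ ‖x‖} ⊆
        Function.support (fun x : EuclideanSpace ℝ (Fin d) => ‖x‖ ^ (-s)) ∩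
          {x : EuclideanSpace ℝ (Fin d) | 1 ≤ ‖x‖} := by
      intro x hx
      refine ⟨?_, hx⟩
      exact (Real.rpow_pos_of_pos (lt_of_lt_of_le one_pos hx) _).ne'
    refine lt_of_lt_of_le ?_ (measure_mono hsub)
    rw [pos_iff_ne_zero]
    intro h0
    have hcover : (Set.univ : Set (EuclideanSpace ℝ (Fin d))) ⊆
        Metric.ball 0 1 ∪ {x : EuclideanSpace ℝ (Fin d) | 1 ≤ ‖x‖} := by
      intro x _
      by_cases h : (1:ℝ) ≤ ‖x‖
      · exact Or.inr h
      · exact Or.inl (by simpa [Metric.mem_ball, dist_zero_right] using lt_of_not_ge h)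
    have hle : volume (Set.univ : Set (EuclideanSpace ℝ (Fin d))) ≤
        volume (Metric.ball (0 : EuclideanSpace ℝ (Fin d)) 1) +
          volume {x : EuclideanSpace ℝ (Fin d) | 1 ≤ ‖x‖} :=
      (measure_mono hcover).trans (measure_union_le _ _)
    rw [h0, add_zero] at hle
    haveI : Nontrivial (EuclideanSpace ℝ (Fin d)) :=
      ⟨0, EuclideanSpace.single ⟨0, hd⟩ (1:ℝ), by
        intro h
        have := congrArg (fun v : EuclideanSpace ℝ (Fin d) => v ⟨0, hd⟩) h.symm
        simp [EuclideanSpace.single_apply] at this⟩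
    have huniv : volume (Set.univ : Set (EuclideanSpace ℝ (Fin d))) = ⊤ :=
      MeasureTheory.measure_univ_of_isAddLeftInvariant
        (volume : Measure (EuclideanSpace ℝ (Fin d)))
    rw [huniv] at hle
    exact absurd (top_le_iff.mp hle) measure_ball_lt_top.ne
  · filter_upwards with x using Real.rpow_nonneg (norm_nonneg x) _
  · rw [← integrable_indicator_iff (measurableSet_S d 1)]
    exact G_integrable s hs

end NotDenseAux

/-- Compactly supported functions are not dense in `(X, ‖·‖_X)`. -/
theorem compactly_supported_not_dense_in_X
    (d : ℕ) (hd : 3 ≤ d) (γ β m : ℝ)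
    (hγ : γ < d) (hβ1 : γ - 2 < β) (hβ2 : β ≤ γ * ((d : ℝ) - 2) / d)
    (hm1 : ((d : ℝ) - 2 - β) / ((d : ℝ) - γ) < m) (hm2 : m < 1)
    (e : ℝ) (he : e = (2 + β - γ) / (1 - m) - ((d : ℝ) - γ)) :
    ∃ f : EuclideanSpace ℝ (Fin d) → ℝ, MemX d γ e f ∧
      ∃ δ > (0 : ℝ), ∀ g : EuclideanSpace ℝ (Fin d) → ℝ, MemX d γ e g →
        (∃ K : Set (EuclideanSpace ℝ (Fin d)), IsCompact K ∧
          ∀ᵐ x : EuclideanSpace ℝ (Fin d), x ∉ K → g x = 0) →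
        δ ≤ Xnorm d γ e (fun x => f x - g x) := by
  classical
  have hdγ : (0:ℝ) < (d:ℝ) - γ := by linarith
  have h1m : (0:ℝ) < 1 - m := by linarith
  have hm' : (d:ℝ) - 2 - β < m * ((d:ℝ) - γ) := by
    have := (div_lt_iff₀ hdγ).mp hm1; linarith
  have he' : 0 < e := by
    rw [he, sub_pos, lt_div_iff₀ h1m]; nlinarith
  set s : ℝ := (d:ℝ) + e with hs_def
  have hs : (d:ℝ) < s := by rw [hs_def]; linarith
  set f : EuclideanSpace ℝ (Fin d) → ℝ :=
    fun x => if (1:ℝ) ≤ ‖x‖ then ‖x‖ ^ (γ - s) else 0 with hf_def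
  have hfG : ∀ x : EuclideanSpace ℝ (Fin d),
      |f x| * ‖x‖ ^ (-γ) = NotDenseAux.G d s x := by
    intro x
    by_cases hx : (1:ℝ) ≤ ‖x‖
    · have hx0 : (0:ℝ) < ‖x‖ := lt_of_lt_of_le one_pos hx
      simp only [hf_def, if_pos hx, NotDenseAux.G,
        Set.indicator_of_mem (show x ∈ {x : EuclideanSpace ℝ (Fin d) | 1 ≤ ‖x‖} from hx)]
      rw [abs_of_nonneg (Real.rpow_nonneg (norm_nonneg x) _), ← Real.rpow_add hx0]
      ring_nf
    · simp only [hf_def, if_neg hx, NotDenseAux.G,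
        Set.indicator_of_notMem (show x ∉ {x : EuclideanSpace ℝ (Fin d) | 1 ≤ ‖x‖} from hx)]
      simp
  set C : ℝ := ∫ x, NotDenseAux.G d s x with hC_def
  have hC : 0 < C := NotDenseAux.G_pos s (by omega) hs
  have hfint : Integrable (fun x : EuclideanSpace ℝ (Fin d) => |f x| * ‖x‖ ^ (-γ)) := by
    have := NotDenseAux.G_integrable (d := d) s hs
    exact this.congr (Filter.Eventually.of_forall fun x => (hfG x).symm)
  have tail_formula : ∀ R : ℝ, 0 < R →
      weightedTail d γ f R = (max 1 R) ^ ((d:ℝ) - s) * C := by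
    intro R hR
    have step1 : weightedTail d γ f R
        = ∫ x in {x : EuclideanSpace ℝ (Fin d) | R ≤ ‖x‖}, NotDenseAux.G d s x := by
      rw [weightedTail]; simp only [hfG]
    by_cases hR1 : (1:ℝ) ≤ R
    · have hmax : max 1 R = R := max_eq_right hR1
      have h2 : ∫ x in {x : EuclideanSpace ℝ (Fin d) | R ≤ ‖x‖}, NotDenseAux.G d s x
          = ∫ x in {x : EuclideanSpace ℝ (Fin d) | R ≤ ‖x‖}, ‖x‖ ^ (-s) := by
        apply setIntegral_congr_fun (NotDenseAux.measurableSet_S d R)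
        intro x hx
        exact Set.indicator_of_mem
          (show x ∈ {x : EuclideanSpace ℝ (Fin d) | 1 ≤ ‖x‖} from le_trans hR1 hx) _
      rw [step1, h2, ← integral_indicator (NotDenseAux.measurableSet_S d R), hmax]
      exact NotDenseAux.G_scaling s hR
    · push_neg at hR1
      have hmax : max 1 R = 1 := max_eq_left hR1.le
      have hsub : {x : EuclideanSpace ℝ (Fin d) | 1 ≤ ‖x‖} ⊆
          {x : EuclideanSpace ℝ (Fin d) | R ≤ ‖x‖} := fun x hx => le_trans hR1.le hx
      rw [step1, NotDenseAux.G, setIntegral_indicator (NotDenseAux.measurableSet_S d 1),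
        Set.inter_eq_self_of_subset_right hsub, hmax, Real.one_rpow, one_mul, hC_def,
        NotDenseAux.G, integral_indicator (NotDenseAux.measurableSet_S d 1)]
  have hmaxpos : ∀ R : ℝ, (0:ℝ) < max 1 R := fun R => lt_of_lt_of_le one_pos (le_max_left 1 R)
  have pow_cancel : ∀ R : ℝ, (max 1 R) ^ e * ((max 1 R) ^ ((d:ℝ) - s) * C) = C := by
    intro R
    rw [← mul_assoc, ← Real.rpow_add (hmaxpos R)]
    have hz : e + ((d:ℝ) - s) = 0 := by rw [hs_def]; ring
    rw [hz, Real.rpow_zero, one_mul]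
  have hXf : ∀ y ∈ XnormSet d γ e f, y = C := by
    rintro y ⟨R, hR, rfl⟩
    rw [tail_formula R hR, pow_cancel R]
  refine ⟨f, ⟨hfint, ⟨C, fun y hy => (hXf y hy).le⟩⟩, C, hC, ?_⟩
  rintro g ⟨hgint, ⟨B, hB⟩⟩ ⟨K, hK, hg0⟩
  have wt_nonneg : ∀ (h : EuclideanSpace ℝ (Fin d) → ℝ) (R : ℝ), 0 ≤ weightedTail d γ h R := by
    intro h R
    apply setIntegral_nonneg (NotDenseAux.measurableSet_S d R)
    intro x _
    exact mul_nonneg (abs_nonneg _) (Real.rpow_nonneg (norm_nonneg x) _)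
  have hsubadd : ∀ R : ℝ, 0 < R →
      weightedTail d γ (fun x => f x - g x) R ≤ weightedTail d γ f R + weightedTail d γ g R := by
    intro R hR
    have hfS : IntegrableOn (fun x : EuclideanSpace ℝ (Fin d) => |f x| * ‖x‖ ^ (-γ))
        {x : EuclideanSpace ℝ (Fin d) | R ≤ ‖x‖} := hfint.integrableOn
    have hgS : IntegrableOn (fun x : EuclideanSpace ℝ (Fin d) => |g x| * ‖x‖ ^ (-γ))
        {x : EuclideanSpace ℝ (Fin d) | R ≤ ‖x‖} := hgint.integrableOn
    by_cases hI : IntegrableOn (fun x : EuclideanSpace ℝ (Fin d) => |f x - g x| * ‖x‖ ^ (-γ))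
        {x : EuclideanSpace ℝ (Fin d) | R ≤ ‖x‖} volume
    · have hmono : weightedTail d γ (fun x => f x - g x) R
          ≤ ∫ x in {x : EuclideanSpace ℝ (Fin d) | R ≤ ‖x‖},
              (|f x| * ‖x‖ ^ (-γ) + |g x| * ‖x‖ ^ (-γ)) := by
        apply setIntegral_mono_on hI (hfS.add hgS) (NotDenseAux.measurableSet_S d R)
        intro x _
        have habs : |f x - g x| ≤ |f x| + |g x| := abs_sub _ _
        have hw : (0:ℝ) ≤ ‖x‖ ^ (-γ) := Real.rpow_nonneg (norm_nonneg x) _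
        calc |f x - g x| * ‖x‖ ^ (-γ) ≤ (|f x| + |g x|) * ‖x‖ ^ (-γ) :=
              mul_le_mul_of_nonneg_right habs hw
          _ = |f x| * ‖x‖ ^ (-γ) + |g x| * ‖x‖ ^ (-γ) := add_mul _ _ _
      calc weightedTail d γ (fun x => f x - g x) R
          ≤ ∫ x in {x : EuclideanSpace ℝ (Fin d) | R ≤ ‖x‖},
              (|f x| * ‖x‖ ^ (-γ) + |g x| * ‖x‖ ^ (-γ)) := hmono
        _ = weightedTail d γ f R + weightedTail d γ g R := integral_add hfS hgS
    · rw [weightedTail, integral_undef hI]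
      exact add_nonneg (wt_nonneg f R) (wt_nonneg g R)
  have hBdd : BddAbove (XnormSet d γ e (fun x => f x - g x)) := by
    refine ⟨C + B, ?_⟩
    rintro y ⟨R, hR, rfl⟩
    have hc : (0:ℝ) ≤ (max 1 R) ^ e := (Real.rpow_pos_of_pos (hmaxpos R) e).le
    calc (max 1 R) ^ e * weightedTail d γ (fun x => f x - g x) R
        ≤ (max 1 R) ^ e * (weightedTail d γ f R + weightedTail d γ g R) :=
          mul_le_mul_of_nonneg_left (hsubadd R hR) hc
      _ = (max 1 R) ^ e * weightedTail d γ f R + (max 1 R) ^ e * weightedTail d γ g R :=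
          mul_add _ _ _
      _ ≤ C + B := add_le_add (le_of_eq (hXf _ ⟨R, hR, rfl⟩)) (hB ⟨R, hR, rfl⟩)
  obtain ⟨M, hM⟩ := hK.isBounded.subset_closedBall 0
  set R0 : ℝ := max 1 M + 1 with hR0_def
  have h1M : (1:ℝ) ≤ max 1 M := le_max_left _ _
  have hR0 : 0 < R0 := by rw [hR0_def]; linarith
  have htail_eq : weightedTail d γ (fun x => f x - g x) R0 = weightedTail d γ f R0 := by
    rw [weightedTail, weightedTail]
    apply setIntegral_congr_ae (NotDenseAux.measurableSet_S d R0)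
    filter_upwards [hg0] with x hx hxS
    have hxK : x ∉ K := by
      intro hxK
      have hxM := hM hxK
      rw [Metric.mem_closedBall, dist_zero_right] at hxM
      have : R0 ≤ ‖x‖ := hxS
      have hMle : M ≤ max 1 M := le_max_right _ _
      linarith
    rw [hx hxK, sub_zero]
  have hmemC : C ∈ XnormSet d γ e (fun x => f x - g x) :=
    ⟨R0, hR0, by rw [htail_eq, tail_formula R0 hR0, pow_cancel R0]⟩
  exact le_csSup hBdd hmemC
end

section
/- For every constant C > 0, the Barenblatt profile ℬ(x) := (C + |x|^σ)^{−1/(1−m)} satisfies sup_{R>0} R^{σ/(1−m)−(d−γ)} ∫_{{|x|≥R}} ℬ(x) |x|^{−γ} dx = lim_{R→∞} R^{σ/(1−m)−(d−γ)} ∫_{{|x|≥R}} ℬ(x) |x|^{−γ} dx = (1−m) ϑ · 2π^{d/2}/Γ(d/2), where Γ is the Gamma function and 2π^{d/2}/Γ(d/2) is the surface measure of the unit sphere 𝕊^{d−1} ⊂ ℝ^d. -/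
open MeasureTheory Real Filter Set Topology

lemma phi_le {σ p e : ℝ} (hp : 0 ≤ p) {t s : ℝ} (ht : 0 ≤ t) (hs : 0 < s) :
    (t + s ^ σ) ^ (-p) * s ^ e ≤ s ^ (σ * -p + e) := by
  have h1 : (0:ℝ) < s ^ σ := Real.rpow_pos_of_pos hs σ
  have h2 : (t + s ^ σ) ^ (-p) ≤ (s ^ σ) ^ (-p) :=
    Real.rpow_le_rpow_of_nonpos h1 (le_add_of_nonneg_left ht) (neg_nonpos.2 hp)
  calc (t + s ^ σ) ^ (-p) * s ^ e ≤ (s ^ σ) ^ (-p) * s ^ e :=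
        mul_le_mul_of_nonneg_right h2 (Real.rpow_nonneg hs.le e)
    _ = s ^ (σ * -p + e) := by
        rw [← Real.rpow_mul hs.le, ← Real.rpow_add hs]

lemma int_bound_val {σ p e : ℝ} (hα : 0 < σ * p - (e + 1)) :
    ∫ s in Ioi (1:ℝ), s ^ (σ * -p + e) = 1 / (σ * p - (e + 1)) := by
  rw [integral_Ioi_rpow_of_lt (by nlinarith) zero_lt_one, Real.one_rpow]
  rw [show σ * -p + e + 1 = -(σ * p - (e+1)) by ring]
  rw [neg_div_neg_eq]

lemma int_bound_integrable {σ p e : ℝ} (hα : 0 < σ * p - (e + 1)) :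
    IntegrableOn (fun s : ℝ => s ^ (σ * -p + e)) (Ioi 1) :=
  integrableOn_Ioi_rpow_of_lt (by nlinarith) zero_lt_one

lemma G_le {σ p e : ℝ} (hp : 0 < p) {t : ℝ} (ht : 0 ≤ t) (hα : 0 < σ * p - (e + 1)) :
    ∫ s in Ioi (1:ℝ), (t + s ^ σ) ^ (-p) * s ^ e ≤ 1 / (σ * p - (e + 1)) := by
  rw [← int_bound_val hα]
  refine integral_mono_of_nonneg ?_ (int_bound_integrable hα) ?_
  · filter_upwards [ae_restrict_mem measurableSet_Ioi] with s hs
    have hs0 : (0:ℝ) < s := lt_trans zero_lt_one hs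
    have : (0:ℝ) < t + s ^ σ := add_pos_of_nonneg_of_pos ht (Real.rpow_pos_of_pos hs0 σ)
    positivity
  · filter_upwards [ae_restrict_mem measurableSet_Ioi] with s hs
    exact phi_le hp.le ht (lt_trans zero_lt_one hs)

lemma tendsto_G {σ p C e : ℝ} (hσ : 0 < σ) (hp : 0 < p) (hC : 0 < C)
    (hα : 0 < σ * p - (e + 1)) :
    Tendsto (fun R : ℝ => ∫ s in Ioi (1:ℝ), (C * R ^ (-σ) + s ^ σ) ^ (-p) * s ^ e) atTop
      (𝓝 (1 / (σ * p - (e + 1)))) := by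
  rw [← int_bound_val hα]
  refine tendsto_integral_filter_of_dominated_convergence (fun s => s ^ (σ * -p + e)) ?_ ?_
    (int_bound_integrable hα) ?_
  · filter_upwards [eventually_gt_atTop (0:ℝ)] with R hR
    have ht : (0:ℝ) < C * R ^ (-σ) := mul_pos hC (Real.rpow_pos_of_pos hR _)
    refine (ContinuousOn.mul ?_ ?_).aestronglyMeasurable measurableSet_Ioi
    · refine ContinuousOn.rpow_const (continuousOn_const.add ?_) ?_
      · exact fun s hs => ((Real.continuousAt_rpow_const s σ
          (Or.inl (ne_of_gt (lt_trans zero_lt_one hs)))).continuousWithinAt)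
      · intro s hs
        have hs0 : (0:ℝ) < s := lt_trans zero_lt_one hs
        exact Or.inl (ne_of_gt (add_pos ht (Real.rpow_pos_of_pos hs0 σ)))
    · exact fun s hs => ((Real.continuousAt_rpow_const s e
        (Or.inl (ne_of_gt (lt_trans zero_lt_one hs)))).continuousWithinAt)
  · filter_upwards [eventually_gt_atTop (0:ℝ)] with R hR
    have ht : (0:ℝ) < C * R ^ (-σ) := mul_pos hC (Real.rpow_pos_of_pos hR _)
    filter_upwards [ae_restrict_mem measurableSet_Ioi] with s hs
    have hs0 : (0:ℝ) < s := lt_trans zero_lt_one hs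
    have h1 : (0:ℝ) < C * R ^ (-σ) + s ^ σ := add_pos ht (Real.rpow_pos_of_pos hs0 σ)
    rw [Real.norm_eq_abs, abs_of_nonneg (by positivity)]
    exact phi_le hp.le ht.le hs0
  · filter_upwards [ae_restrict_mem measurableSet_Ioi] with s hs
    have hs0 : (0:ℝ) < s := lt_trans zero_lt_one hs
    have hsσ : (0:ℝ) < s ^ σ := Real.rpow_pos_of_pos hs0 σ
    have htR : Tendsto (fun R : ℝ => C * R ^ (-σ)) atTop (𝓝 0) := by
      simpa using (tendsto_rpow_neg_atTop hσ).const_mul C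
    have hcont : ContinuousAt (fun t : ℝ => (t + s ^ σ) ^ (-p)) 0 :=
      ContinuousAt.rpow_const (continuousAt_id.add continuousAt_const)
        (Or.inl (by simpa using hsσ.ne'))
    have := (hcont.tendsto.comp htR).mul_const (s ^ e)
    simp only [Function.comp, zero_add] at this
    convert this using 2
    rw [← Real.rpow_mul hs0.le, ← Real.rpow_add hs0]

lemma sub_lemma {σ p C e R : ℝ} (hC : 0 < C) (hR : 0 < R) :
    R ^ (σ * p - (e + 1)) * ∫ y in Ioi R, (C + y ^ σ) ^ (-p) * y ^ e
      = ∫ s in Ioi (1:ℝ), (C * R ^ (-σ) + s ^ σ) ^ (-p) * s ^ e := by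
  have hsub := integral_comp_mul_left_Ioi (fun y => (C + y ^ σ) ^ (-p) * y ^ e) 1 hR
  rw [mul_one, smul_eq_mul] at hsub
  have h2 : ∫ y in Ioi R, (C + y ^ σ) ^ (-p) * y ^ e
      = R * ∫ s in Ioi (1:ℝ), (C + (R * s) ^ σ) ^ (-p) * (R * s) ^ e := by
    rw [hsub, ← mul_assoc, mul_inv_cancel₀ hR.ne', one_mul]
  rw [h2, ← mul_assoc, ← integral_const_mul]
  refine setIntegral_congr_fun measurableSet_Ioi (fun s hs => ?_)
  have hs0 : (0:ℝ) < s := lt_trans zero_lt_one hs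
  have hX : (0:ℝ) < C * R ^ (-σ) + s ^ σ :=
    add_pos (mul_pos hC (Real.rpow_pos_of_pos hR _)) (Real.rpow_pos_of_pos hs0 σ)
  have hA : C + (R * s) ^ σ = R ^ σ * (C * R ^ (-σ) + s ^ σ) := by
    rw [Real.mul_rpow hR.le hs0.le, mul_add,
      show R ^ σ * (C * R ^ (-σ)) = R ^ σ * R ^ (-σ) * C by ring,
      ← Real.rpow_add hR, add_neg_cancel, Real.rpow_zero, one_mul]
  have hRpow : R ^ (σ * p - (e + 1)) * R * R ^ (σ * -p) * R ^ e = 1 := by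
    rw [← Real.rpow_add_one hR.ne', ← Real.rpow_add hR, ← Real.rpow_add hR,
      show σ * p - (e + 1) + 1 + σ * -p + e = 0 by ring, Real.rpow_zero]
  rw [hA, Real.mul_rpow (Real.rpow_pos_of_pos hR σ).le hX.le,
    Real.mul_rpow hR.le hs0.le, ← Real.rpow_mul hR.le]
  calc R ^ (σ * p - (e + 1)) * R *
        ((R ^ (σ * -p) * (C * R ^ (-σ) + s ^ σ) ^ (-p)) * (R ^ e * s ^ e))
      = (R ^ (σ * p - (e + 1)) * R * R ^ (σ * -p) * R ^ e) *
        ((C * R ^ (-σ) + s ^ σ) ^ (-p) * s ^ e) := by ring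
    _ = (C * R ^ (-σ) + s ^ σ) ^ (-p) * s ^ e := by rw [hRpow, one_mul]

lemma weightedTail_aux (d : ℕ) (hd : 3 ≤ d) (γ σ q C : ℝ) (hC : 0 < C)
    (ℬ : EuclideanSpace ℝ (Fin d) → ℝ)
    (hℬ : ∀ x, ℬ x = (C + ‖x‖ ^ σ) ^ (-q)) {R : ℝ} (hR : 0 < R) :
    (∫ x in {x : EuclideanSpace ℝ (Fin d) | R ≤ ‖x‖}, |ℬ x| * ‖x‖ ^ (-γ))
      = ((d : ℝ) * (Real.sqrt π ^ d / Real.Gamma ((d : ℝ) / 2 + 1))) *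
        ∫ y in Ioi R, (C + y ^ σ) ^ (-q) * y ^ ((d:ℝ) - 1 - γ) := by
  haveI : Nonempty (Fin d) := ⟨⟨0, by omega⟩⟩
  haveI : Nontrivial (EuclideanSpace ℝ (Fin d)) := inferInstance
  set f : ℝ → ℝ := indicator (Ici R) (fun r => (C + r ^ σ) ^ (-q) * r ^ (-γ)) with hf
  have hset : MeasurableSet {x : EuclideanSpace ℝ (Fin d) | R ≤ ‖x‖} :=
    (isClosed_le continuous_const continuous_norm).measurableSet
  have step1 : (∫ x in {x : EuclideanSpace ℝ (Fin d) | R ≤ ‖x‖}, |ℬ x| * ‖x‖ ^ (-γ))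
      = ∫ x : EuclideanSpace ℝ (Fin d), f ‖x‖ := by
    rw [← integral_indicator hset]
    refine integral_congr_ae (Filter.Eventually.of_forall fun x => ?_)
    have hpos : (0:ℝ) < C + ‖x‖ ^ σ :=
      add_pos_of_pos_of_nonneg hC (Real.rpow_nonneg (norm_nonneg x) σ)
    simp only [hf, Set.indicator_apply, mem_setOf_eq, mem_Ici]
    by_cases hx : R ≤ ‖x‖
    · rw [if_pos hx, if_pos hx, hℬ, abs_of_nonneg (Real.rpow_nonneg hpos.le _)]
    · rw [if_neg hx, if_neg hx]
  rw [step1, MeasureTheory.integral_fun_norm_addHaar volume f]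
  rw [finrank_euclideanSpace_fin]
  have hvol : ((volume (Metric.ball (0 : EuclideanSpace ℝ (Fin d)) 1)).toReal)
      = Real.sqrt π ^ d / Real.Gamma ((d : ℝ) / 2 + 1) := by
    rw [EuclideanSpace.volume_ball, Fintype.card_fin, ENNReal.ofReal_one, one_pow, one_mul,
      ENNReal.toReal_ofReal]
    have : (0:ℝ) < Real.Gamma ((d:ℝ) / 2 + 1) := Real.Gamma_pos_of_pos (by positivity)
    positivity
  rw [measureReal_def, hvol]
  have step2 : (∫ y in Ioi (0:ℝ), y ^ (d - 1) • f y)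
      = ∫ y in Ioi R, (C + y ^ σ) ^ (-q) * y ^ ((d:ℝ) - 1 - γ) := by
    have key : ∀ y : ℝ, y ^ (d - 1) • f y
        = indicator (Ici R) (fun y => y ^ (d - 1) * ((C + y ^ σ) ^ (-q) * y ^ (-γ))) y := by
      intro y
      simp only [hf, smul_eq_mul, Set.indicator_apply]
      by_cases hy : y ∈ Ici R
      · rw [if_pos hy, if_pos hy]
      · rw [if_neg hy, if_neg hy, mul_zero]
    rw [integral_congr_ae (Filter.Eventually.of_forall fun y => key y),
      setIntegral_indicator measurableSet_Ici,
      inter_eq_self_of_subset_right (Ici_subset_Ioi.mpr hR),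
      integral_Ici_eq_integral_Ioi]
    refine setIntegral_congr_fun measurableSet_Ioi fun y hy => ?_
    have hy0 : (0:ℝ) < y := lt_trans hR hy
    have hcast : (y:ℝ) ^ (d - 1) = y ^ ((d:ℝ) - 1) := by
      rw [← Real.rpow_natCast y (d-1), Nat.cast_sub (by omega), Nat.cast_one]
    calc y ^ (d-1) * ((C + y ^ σ) ^ (-q) * y ^ (-γ))
        = (C + y ^ σ) ^ (-q) * (y ^ ((d:ℝ)-1) * y ^ (-γ)) := by rw [hcast]; ring
      _ = (C + y ^ σ) ^ (-q) * y ^ ((d:ℝ)-1-γ) := by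
          rw [← Real.rpow_add hy0]; ring_nf
  rw [step2, nsmul_eq_mul, smul_eq_mul]
  ring

/-- The tail seminorm of the Barenblatt profile `ℬ(x) = (C + |x|^σ)^{-1/(1-m)}` is
`(1-m) ϑ |𝕊^{d-1}|`, and is attained in the limit `R → ∞`. -/
theorem barenblatt_tail_seminorm
    (d : ℕ) (hd : 3 ≤ d) (γ β m : ℝ)
    (hγ : γ < d) (hβ1 : γ - 2 < β) (hβ2 : β ≤ γ * ((d : ℝ) - 2) / d)
    (hm1 : ((d : ℝ) - 2 - β) / ((d : ℝ) - γ) < m) (hm2 : m < 1)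
    (σ ϑ : ℝ) (hσ : σ = 2 + β - γ)
    (hϑ : ϑ = 1 / (((d : ℝ) - γ) * (m - ((d : ℝ) - 2 - β) / ((d : ℝ) - γ))))
    (C : ℝ) (hC : 0 < C)
    (ℬ : EuclideanSpace ℝ (Fin d) → ℝ)
    (hℬ : ∀ x : EuclideanSpace ℝ (Fin d), ℬ x = (C + ‖x‖ ^ σ) ^ (-(1 / (1 - m)))) :
    sSup {y : ℝ | ∃ R : ℝ, 0 < R ∧
        y = R ^ (σ / (1 - m) - ((d : ℝ) - γ)) * weightedTail d γ ℬ R}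
      = (1 - m) * ϑ * (2 * π ^ ((d : ℝ) / 2) / Real.Gamma ((d : ℝ) / 2)) ∧
    Tendsto (fun R : ℝ => R ^ (σ / (1 - m) - ((d : ℝ) - γ)) * weightedTail d γ ℬ R)
      atTop
      (nhds ((1 - m) * ϑ * (2 * π ^ ((d : ℝ) / 2) / Real.Gamma ((d : ℝ) / 2)))) := by
  have h1m : (0:ℝ) < 1 - m := by linarith
  have hd3 : (3:ℝ) ≤ (d:ℝ) := by exact_mod_cast hd
  have hdγ : (0:ℝ) < (d:ℝ) - γ := by linarith
  have hσ0 : 0 < σ := by rw [hσ]; linarith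
  have hp0 : (0:ℝ) < 1/(1-m) := by positivity
  have hαpos' : 0 < σ - (1-m)*((d:ℝ)-γ) := by
    rw [hσ]; nlinarith [(div_lt_iff₀ hdγ).1 hm1]
  have hα0 : 0 < σ * (1/(1-m)) - (((d:ℝ) - 1 - γ) + 1) := by
    have heq : σ * (1/(1-m)) - (((d:ℝ) - 1 - γ) + 1) = (σ - (1-m)*((d:ℝ)-γ))/(1-m) := by
      field_simp
      ring
    rw [heq]; exact div_pos hαpos' h1m
  have hexp : σ/(1-m) - ((d:ℝ)-γ) = σ * (1/(1-m)) - (((d:ℝ) - 1 - γ) + 1) := by ring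
  have hΓpos : (0:ℝ) < Real.Gamma ((d:ℝ)/2) := Real.Gamma_pos_of_pos (by positivity)
  have hSSpos : (0:ℝ) < 2 * π ^ ((d:ℝ)/2) / Real.Gamma ((d:ℝ)/2) := by positivity
  have hSconst : ((d:ℝ) * (Real.sqrt π ^ d / Real.Gamma ((d:ℝ)/2 + 1)))
      = 2 * π ^ ((d:ℝ)/2) / Real.Gamma ((d:ℝ)/2) := by
    rw [Real.Gamma_add_one (ne_of_gt (by positivity : (0:ℝ) < (d:ℝ)/2))]
    have hπ : Real.sqrt π ^ d = π ^ ((d:ℝ)/2) := by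
      rw [Real.sqrt_eq_rpow, ← Real.rpow_natCast (π ^ ((1:ℝ)/2)) d, ← Real.rpow_mul pi_pos.le]
      congr 1; ring
    rw [hπ]
    field_simp
  have hϑα : (1-m)*ϑ = 1/(σ * (1/(1-m)) - (((d:ℝ) - 1 - γ) + 1)) := by
    have hden : ((d:ℝ)-γ) * (m - ((d:ℝ)-2-β)/((d:ℝ)-γ))
        = (σ * (1/(1-m)) - (((d:ℝ) - 1 - γ) + 1)) * (1-m) := by
      rw [hσ]; field_simp; ring
    rw [hϑ, hden, one_div, mul_inv, one_div, ← mul_assoc, mul_comm (1-m), mul_assoc,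
      mul_inv_cancel₀ h1m.ne', mul_one, one_div]
  have hF : ∀ R : ℝ, 0 < R →
      R ^ (σ / (1 - m) - ((d : ℝ) - γ)) * weightedTail d γ ℬ R
        = (2 * π ^ ((d:ℝ)/2) / Real.Gamma ((d:ℝ)/2)) *
          ∫ s in Ioi (1:ℝ), (C * R ^ (-σ) + s ^ σ) ^ (-(1/(1-m))) * s ^ ((d:ℝ) - 1 - γ) := by
    intro R hR
    have haux := weightedTail_aux d hd γ σ (1/(1-m)) C hC ℬ hℬ hR
    simp only [weightedTail]
    rw [haux, hSconst, hexp, ← sub_lemma hC hR]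
    ring
  have hLeq : (2 * π ^ ((d:ℝ)/2) / Real.Gamma ((d:ℝ)/2)) *
        (1/(σ * (1/(1-m)) - (((d:ℝ) - 1 - γ) + 1)))
      = (1 - m) * ϑ * (2 * π ^ ((d : ℝ) / 2) / Real.Gamma ((d : ℝ) / 2)) := by
    rw [hϑα]; ring
  have hTend : Tendsto (fun R : ℝ => R ^ (σ / (1 - m) - ((d : ℝ) - γ)) * weightedTail d γ ℬ R)
      atTop (𝓝 ((1 - m) * ϑ * (2 * π ^ ((d : ℝ) / 2) / Real.Gamma ((d : ℝ) / 2)))) := by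
    rw [← hLeq]
    refine Tendsto.congr' ?_ ((tendsto_G hσ0 hp0 hC hα0).const_mul
      (2 * π ^ ((d:ℝ)/2) / Real.Gamma ((d:ℝ)/2)))
    filter_upwards [eventually_gt_atTop (0:ℝ)] with R hR
    exact (hF R hR).symm
  have hub : ∀ y ∈ {y : ℝ | ∃ R : ℝ, 0 < R ∧
      y = R ^ (σ / (1 - m) - ((d : ℝ) - γ)) * weightedTail d γ ℬ R},
      y ≤ (1 - m) * ϑ * (2 * π ^ ((d : ℝ) / 2) / Real.Gamma ((d : ℝ) / 2)) := by
    rintro y ⟨R, hR, rfl⟩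
    rw [hF R hR, ← hLeq]
    refine mul_le_mul_of_nonneg_left ?_ hSSpos.le
    exact G_le hp0 (mul_pos hC (Real.rpow_pos_of_pos hR _)).le hα0
  refine ⟨le_antisymm (csSup_le ⟨_, ⟨1, one_pos, rfl⟩⟩ hub) (le_of_tendsto hTend ?_), hTend⟩
  filter_upwards [eventually_gt_atTop (0:ℝ)] with R hR
  exact le_csSup ⟨_, hub⟩ ⟨R, hR, rfl⟩
end

section
/- There exist constants c, C > 0 depending only on d and γ such that for every x_0 ∈ ℝ^d and every R > 0, c R^d (max{|x_0|, R/2})^{−γ} ≤ μ_γ(B_R(x_0)) ≤ C R^d (max{|x_0|, R/2})^{−γ}. -/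
open MeasureTheory Real Set Metric Measure

private lemma wmb_rpow_le_max {a t b : ℝ} (γ : ℝ) (ha : 0 < a) (h1 : a ≤ t) (h2 : t ≤ b) :
    t ^ (-γ) ≤ max (a ^ (-γ)) (b ^ (-γ)) := by
  rcases le_or_gt 0 (-γ) with h | h
  · exact le_max_of_le_right (Real.rpow_le_rpow (ha.le.trans h1) h2 h)
  · exact le_max_of_le_left (Real.rpow_le_rpow_of_nonpos ha h1 h.le)

private lemma wmb_min_le_rpow {a t b : ℝ} (γ : ℝ) (ha : 0 < a) (h1 : a ≤ t) (h2 : t ≤ b) :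
    min (a ^ (-γ)) (b ^ (-γ)) ≤ t ^ (-γ) := by
  rcases le_or_gt 0 (-γ) with h | h
  · exact min_le_of_left_le (Real.rpow_le_rpow ha.le h1 h)
  · exact min_le_of_right_le (Real.rpow_le_rpow_of_nonpos (ha.trans_le h1) h2 h.le)

private theorem wmb_integrable_fun_norm {E : Type*} [NormedAddCommGroup E] [NormedSpace ℝ E]
    [MeasurableSpace E] [BorelSpace E] [Nontrivial E] [FiniteDimensional ℝ E]
    (μ : Measure E) [μ.IsAddHaarMeasure] [NullSingletonClass μ] (f : ℝ → ℝ)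
    (hf : IntegrableOn (fun y => y ^ (Module.finrank ℝ E - 1) * f y) (Ioi (0:ℝ))) :
    Integrable (fun x : E => f ‖x‖) μ := by
  have hs : MeasurableSet ({(0:E)}ᶜ) := (measurableSet_singleton _).compl
  rw [show μ = μ.restrict ({(0:E)}ᶜ) from (restrict_compl_singleton (0:E)).symm,
    ← map_comap_subtype_coe hs,
    (MeasurableEmbedding.subtype_coe hs).integrable_map_iff]
  have : ((fun x : E => f ‖x‖) ∘ (Subtype.val : ({(0:E)}ᶜ : Set E) → E)) =
      ((f ∘ Subtype.val ∘ Prod.snd) ∘ (homeomorphUnitSphereProd E)) := by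
    funext z; simp
  rw [this,
    (μ.measurePreserving_homeomorphUnitSphereProd).integrable_comp_emb
      (Homeomorph.measurableEmbedding _)]
  have h2 : (f ∘ Subtype.val ∘ Prod.snd : sphere (0:E) 1 × Ioi (0:ℝ) → ℝ) =
      (fun z : sphere (0:E) 1 × Ioi (0:ℝ) => (1:ℝ) • f z.2.1) := by
    funext z; simp
  have hg : Integrable (fun y : Ioi (0:ℝ) => f y.1)
      (Measure.volumeIoiPow (Module.finrank ℝ E - 1)) := by
    rw [Measure.volumeIoiPow, integrable_withDensity_iff]
    rotate_left
    · exact (measurable_subtype_coe.pow_const _).ennreal_ofReal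
    · exact Filter.Eventually.of_forall fun x => ENNReal.ofReal_lt_top
    · have H : IntegrableOn
          (fun y : ℝ => f y * (ENNReal.ofReal (y ^ (Module.finrank ℝ E - 1))).toReal)
          (Ioi (0:ℝ)) := by
        refine hf.congr_fun (fun y hy => ?_) measurableSet_Ioi
        dsimp only
        rw [ENNReal.toReal_ofReal (pow_nonneg (le_of_lt hy) _)]
        ring
      have H2 := (MeasurableEmbedding.subtype_coe
          (measurableSet_Ioi (a := (0:ℝ)))).integrable_map_iff
        (μ := comap Subtype.val volume)
        (g := fun y : ℝ => f y * (ENNReal.ofReal (y ^ (Module.finrank ℝ E - 1))).toReal)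
      rw [map_comap_subtype_coe measurableSet_Ioi] at H2
      exact H2.mp H
  rw [h2]
  exact Integrable.smul_prod (f := fun _ : sphere (0:E) 1 => (1:ℝ))
    (g := fun y : Ioi (0:ℝ) => f y.1) (integrable_const _) hg

private lemma wmb_indicator_eq (d : ℕ) (γ r : ℝ) :
    (ball (0 : EuclideanSpace ℝ (Fin d)) r).indicator (fun x => ‖x‖ ^ (-γ))
      = fun x : EuclideanSpace ℝ (Fin d) =>
        (Iio r).indicator (fun y : ℝ => y ^ (-γ)) ‖x‖ := by
  funext x
  simp only [indicator]
  by_cases h : x ∈ ball (0 : EuclideanSpace ℝ (Fin d)) r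
  · rw [mem_ball_zero_iff] at h; simp [h]
  · rw [mem_ball_zero_iff] at h; simp [h]

private theorem wmb_integrableOn (d : ℕ) (hd : 0 < d) {γ : ℝ} (hγ : γ < d) (r : ℝ) :
    IntegrableOn (fun x : EuclideanSpace ℝ (Fin d) => ‖x‖ ^ (-γ)) (ball 0 r) := by
  set E := EuclideanSpace ℝ (Fin d)
  haveI : Nonempty (Fin d) := ⟨⟨0, hd⟩⟩
  haveI : Nontrivial E := inferInstance
  have hdim : Module.finrank ℝ E = d := finrank_euclideanSpace_fin
  rw [← integrable_indicator_iff measurableSet_ball, wmb_indicator_eq]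
  apply wmb_integrable_fun_norm volume (fun y : ℝ => (Iio r).indicator (fun y => y ^ (-γ)) y)
  rw [hdim]
  have e1 : EqOn ((Iio r).indicator (fun y : ℝ => y ^ (d - 1) * y ^ (-γ)))
      (fun y : ℝ => y ^ (d - 1) * (Iio r).indicator (fun y : ℝ => y ^ (-γ)) y) Set.univ := by
    intro y _
    by_cases h : y < r <;> simp [indicator, h]
  refine IntegrableOn.congr_fun ?_ (e1.mono (Set.subset_univ _)) measurableSet_Ioi
  rw [IntegrableOn, integrable_indicator_iff measurableSet_Iio, IntegrableOn,
    Measure.restrict_restrict measurableSet_Iio, Set.Iio_inter_Ioi]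
  rcases le_or_gt r 0 with hr | hr
  · rw [Set.Ioo_eq_empty (not_lt.mpr hr)]
    simp
  · have h2 : IntegrableOn (fun y : ℝ => y ^ ((d:ℝ) - 1 - γ)) (Ioo 0 r) := by
      have h3 : IntervalIntegrable (fun y : ℝ => y ^ ((d:ℝ) - 1 - γ)) volume 0 r :=
        intervalIntegral.intervalIntegrable_rpow' (by push_cast; linarith)
      rw [intervalIntegrable_iff_integrableOn_Ioc_of_le hr.le] at h3
      exact h3.mono_set Set.Ioo_subset_Ioc_self
    refine h2.congr_fun (fun y hy => ?_) measurableSet_Ioo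
    rw [← Real.rpow_natCast y (d-1), ← Real.rpow_add hy.1]
    congr 1
    push_cast [Nat.cast_sub hd]
    ring

private theorem wmb_integral_ball (d : ℕ) (hd : 0 < d) {γ : ℝ} (hγ : γ < d) {r : ℝ} (hr : 0 < r) :
    ∫ x in ball (0 : EuclideanSpace ℝ (Fin d)) r, ‖x‖ ^ (-γ)
      = ((d : ℝ) * (volume (ball (0 : EuclideanSpace ℝ (Fin d)) 1)).toReal / ((d:ℝ) - γ))
          * r ^ ((d:ℝ) - γ) := by
  set E := EuclideanSpace ℝ (Fin d)
  haveI : Nonempty (Fin d) := ⟨⟨0, hd⟩⟩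
  haveI : Nontrivial E := inferInstance
  have hdim : Module.finrank ℝ E = d := finrank_euclideanSpace_fin
  rw [← integral_indicator measurableSet_ball, wmb_indicator_eq,
    integral_fun_norm_addHaar volume (fun y : ℝ => (Iio r).indicator (fun y => y ^ (-γ)) y), hdim]
  have hJ : ∫ y in Ioi (0:ℝ), y ^ (d - 1) • (Iio r).indicator (fun y : ℝ => y ^ (-γ)) y
      = r ^ ((d:ℝ) - γ) / ((d:ℝ) - γ) := by
    have e1 : ∫ y in Ioi (0:ℝ), y ^ (d - 1) • (Iio r).indicator (fun y : ℝ => y ^ (-γ)) y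
        = ∫ y in Ioi (0:ℝ), (Iio r).indicator (fun y => y ^ (d-1) * y ^ (-γ)) y := by
      refine setIntegral_congr_fun measurableSet_Ioi (fun y hy => ?_)
      by_cases h : y < r <;> simp [indicator, h, smul_eq_mul]
    rw [e1, setIntegral_indicator measurableSet_Iio, Set.Ioi_inter_Iio]
    have e2 : ∫ y in Ioo (0:ℝ) r, y ^ (d-1) * y ^ (-γ)
        = ∫ y in Ioo (0:ℝ) r, y ^ ((d:ℝ) - 1 - γ) := by
      refine setIntegral_congr_fun measurableSet_Ioo (fun y hy => ?_)
      rw [← Real.rpow_natCast y (d-1), ← Real.rpow_add hy.1]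
      congr 1
      push_cast [Nat.cast_sub hd]
      ring
    rw [e2, ← integral_Ioc_eq_integral_Ioo, ← intervalIntegral.integral_of_le hr.le,
      integral_rpow (Or.inl (by push_cast; linarith))]
    rw [Real.zero_rpow (by intro h; linarith [h] : ((d:ℝ) - 1 - γ + 1) ≠ 0)]
    norm_num
    ring_nf
  rw [hJ, nsmul_eq_mul, smul_eq_mul, measureReal_def]
  ring

/-- Two-sided bound for the weighted measure of Euclidean balls:
`μ_γ(B_R(x₀)) ≍ R^d (max{|x₀|, R/2})^{-γ}`. -/
theorem weighted_measure_ball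
    (d : ℕ) (hd : 3 ≤ d) (γ : ℝ) (hγ : γ < d) :
    ∃ c > (0 : ℝ), ∃ C > (0 : ℝ),
      ∀ x₀ : EuclideanSpace ℝ (Fin d), ∀ R : ℝ, 0 < R →
        c * R ^ (d : ℝ) * (max ‖x₀‖ (R / 2)) ^ (-γ) ≤
            (∫ x in Metric.ball x₀ R, ‖x‖ ^ (-γ)) ∧
          (∫ x in Metric.ball x₀ R, ‖x‖ ^ (-γ)) ≤
            C * R ^ (d : ℝ) * (max ‖x₀‖ (R / 2)) ^ (-γ) := by
  set E := EuclideanSpace ℝ (Fin d)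
  have hd0 : 0 < d := by omega
  haveI : Nonempty (Fin d) := ⟨⟨0, hd0⟩⟩
  haveI : Nontrivial E := inferInstance
  have hdim : Module.finrank ℝ E = d := finrank_euclideanSpace_fin
  set v : ℝ := (volume (ball (0 : E) 1)).toReal with hv_def
  have hv : 0 < v :=
    ENNReal.toReal_pos (measure_ball_pos _ _ one_pos).ne' measure_ball_lt_top.ne
  set κ : ℝ := (d : ℝ) * v / ((d:ℝ) - γ) with hκ_def
  have hκ : 0 < κ := by
    apply div_pos (mul_pos (by exact_mod_cast hd0) hv) (by linarith)
  set c : ℝ := v * ((8:ℝ)^d)⁻¹ * min ((4:ℝ)^γ) ((3:ℝ)^(-γ)) with hc_def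
  set C : ℝ := max (κ * (3:ℝ) ^ ((d:ℝ) - γ) * max ((2:ℝ)^γ) ((2:ℝ)^(-γ)))
      (v * max ((2:ℝ)^γ) (((3:ℝ)/2)^(-γ))) with hC_def
  have hc : 0 < c := by
    apply mul_pos (mul_pos hv (by positivity))
    exact lt_min (rpow_pos_of_pos (by norm_num) _) (rpow_pos_of_pos (by norm_num) _)
  have hC : 0 < C := by
    apply lt_of_lt_of_le ?_ (le_max_left _ _)
    apply mul_pos (mul_pos hκ (rpow_pos_of_pos (by norm_num) _))
    exact lt_max_of_lt_left (rpow_pos_of_pos (by norm_num) _)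
  refine ⟨c, hc, C, hC, fun x₀ R hR => ?_⟩
  set M : ℝ := max ‖x₀‖ (R/2) with hM_def
  have hM2 : R/2 ≤ M := le_max_right _ _
  have hM : 0 < M := lt_of_lt_of_le (by linarith) hM2
  have hMne : 0 ≤ M := hM.le
  have hR2M : R ≤ 2*M := by linarith
  have hIball : IntegrableOn (fun x : E => ‖x‖ ^ (-γ)) (ball x₀ R) := by
    refine (wmb_integrableOn d hd0 hγ (‖x₀‖ + R)).mono_set ?_
    exact ball_subset_ball' (by rw [dist_zero_right]; linarith)
  have hnonneg : ∀ (t : Set E), 0 ≤ᵐ[volume.restrict t] (fun x : E => ‖x‖ ^ (-γ)) :=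
    fun t => Filter.Eventually.of_forall fun x => Real.rpow_nonneg (norm_nonneg x) _
  constructor
  · -- lower bound
    obtain ⟨y, hsub, hbd⟩ : ∃ y : E, ball y (R/8) ⊆ ball x₀ R ∧
        ∀ x ∈ ball y (R/8), M/4 ≤ ‖x‖ ∧ ‖x‖ ≤ 3*M := by
      rcases le_or_gt (R/2) ‖x₀‖ with h | h
      · have hMx : M = ‖x₀‖ := max_eq_left h
        have hx0 : 0 < ‖x₀‖ := lt_of_lt_of_le (by linarith) h
        refine ⟨(1 + (R/2)/‖x₀‖) • x₀, ?_, ?_⟩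
        · intro x hx
          rw [mem_ball] at hx ⊢
          have hdy : dist ((1 + (R/2)/‖x₀‖) • x₀) x₀ = R/2 := by
            rw [dist_eq_norm, show (1 + (R/2)/‖x₀‖) • x₀ - x₀ = ((R/2)/‖x₀‖) • x₀ by
              rw [add_smul, one_smul]; abel, norm_smul, Real.norm_of_nonneg (by positivity),
              div_mul_cancel₀ _ hx0.ne']
          have := dist_triangle x ((1 + (R/2)/‖x₀‖) • x₀) x₀
          rw [hdy] at this
          linarith
        · intro x hx
          rw [mem_ball, dist_eq_norm] at hx
          have hny : ‖(1 + (R/2)/‖x₀‖) • x₀‖ = ‖x₀‖ + R/2 := by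
            rw [norm_smul, Real.norm_of_nonneg (by positivity)]
            field_simp
          have habs := abs_norm_sub_norm_le x ((1 + (R/2)/‖x₀‖) • x₀)
          rw [hny] at habs
          rw [abs_le] at habs
          have hRx : R ≤ 2*‖x₀‖ := by linarith
          constructor
          · have : ‖x₀‖ + R/2 - R/8 ≤ ‖x‖ := by linarith
            rw [hMx]; linarith
          · rw [hMx]; linarith
      · have hMx : M = R/2 := max_eq_right h.le
        set e : E := EuclideanSpace.single (⟨0, hd0⟩ : Fin d) (1:ℝ) with he_def
        have hne : ‖e‖ = 1 := by
          rw [he_def, EuclideanSpace.norm_single, norm_one]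
        have hny : ‖(R/4) • e‖ = R/4 := by
          rw [norm_smul, Real.norm_of_nonneg (by positivity), hne, mul_one]
        refine ⟨(R/4) • e, ?_, ?_⟩
        · intro x hx
          rw [mem_ball] at hx ⊢
          have h4 := dist_triangle4 x ((R/4) • e) 0 x₀
          rw [dist_zero_right, dist_zero_left, hny] at h4
          linarith
        · intro x hx
          rw [mem_ball, dist_eq_norm] at hx
          have habs := abs_norm_sub_norm_le x ((R/4) • e)
          rw [hny, abs_le] at habs
          constructor
          · rw [hMx]; linarith
          · rw [hMx]; linarith
    have hvol : (volume (ball y (R/8))).toReal = (R/8)^d * v := by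
      rw [Measure.addHaar_ball volume y (by positivity : (0:ℝ) ≤ R/8), hdim,
        ENNReal.toReal_mul, ENNReal.toReal_ofReal (by positivity)]
    calc c * R ^ (d:ℝ) * M ^ (-γ)
        = min ((M/4) ^ (-γ)) ((3*M) ^ (-γ)) * ((R/8)^d * v) := by
          have e4 : (M/4) ^ (-γ) = M ^ (-γ) * (4:ℝ)^γ := by
            rw [Real.div_rpow hMne (by norm_num), div_eq_mul_inv,
              ← Real.rpow_neg (by norm_num), neg_neg]
          have e3 : (3*M) ^ (-γ) = M ^ (-γ) * (3:ℝ)^(-γ) := by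
            rw [Real.mul_rpow (by norm_num) hMne]; ring
          rw [e4, e3, ← mul_min_of_nonneg _ _ (Real.rpow_nonneg hMne (-γ)),
            Real.rpow_natCast, div_pow, hc_def]
          ring
      _ ≤ min ((M/4) ^ (-γ)) ((3*M) ^ (-γ)) * (volume (ball y (R/8))).toReal := by
          rw [hvol]
      _ ≤ ∫ x in ball y (R/8), ‖x‖ ^ (-γ) := by
          refine setIntegral_ge_of_const_le_real measurableSet_ball measure_ball_lt_top.ne
            (fun x hx => wmb_min_le_rpow γ (by positivity) (hbd x hx).1 (hbd x hx).2)
            (hIball.mono_set hsub)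
      _ ≤ ∫ x in ball x₀ R, ‖x‖ ^ (-γ) :=
          setIntegral_mono_set hIball (hnonneg _) (HasSubset.Subset.eventuallyLE hsub)
  · -- upper bound
    rcases le_or_gt ‖x₀‖ (2*R) with h1 | h1
    · have hM2R : M ≤ 2*R := max_le h1 (by linarith)
      have hsub3 : ball x₀ R ⊆ ball (0:E) (3*R) :=
        ball_subset_ball' (by rw [dist_zero_right]; linarith)
      have hb : R ^ (-γ) ≤ M ^ (-γ) * max ((2:ℝ)^γ) ((2:ℝ)^(-γ)) := by
        have e4 : (M/2) ^ (-γ) = M ^ (-γ) * (2:ℝ)^γ := by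
          rw [Real.div_rpow hMne (by norm_num), div_eq_mul_inv,
            ← Real.rpow_neg (by norm_num), neg_neg]
        have e3 : (2*M) ^ (-γ) = M ^ (-γ) * (2:ℝ)^(-γ) := by
          rw [Real.mul_rpow (by norm_num) hMne]; ring
        calc R ^ (-γ) ≤ max ((M/2) ^ (-γ)) ((2*M) ^ (-γ)) :=
              wmb_rpow_le_max γ (by positivity) (by linarith) hR2M
          _ = M ^ (-γ) * max ((2:ℝ)^γ) ((2:ℝ)^(-γ)) := by
              rw [e4, e3, ← mul_max_of_nonneg _ _ (Real.rpow_nonneg hMne (-γ))]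
      calc ∫ x in ball x₀ R, ‖x‖ ^ (-γ)
          ≤ ∫ x in ball (0:E) (3*R), ‖x‖ ^ (-γ) :=
            setIntegral_mono_set (wmb_integrableOn d hd0 hγ (3*R)) (hnonneg _)
              (HasSubset.Subset.eventuallyLE hsub3)
        _ = κ * (3*R) ^ ((d:ℝ) - γ) := wmb_integral_ball d hd0 hγ (by positivity)
        _ = (κ * (3:ℝ) ^ ((d:ℝ) - γ)) * (R ^ ((d:ℝ)) * R ^ (-γ)) := by
            rw [Real.mul_rpow (by norm_num) hR.le,
              show (d:ℝ) - γ = (d:ℝ) + (-γ) from sub_eq_add_neg _ _, Real.rpow_add hR]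
            ring
        _ ≤ (κ * (3:ℝ) ^ ((d:ℝ) - γ)) * (R ^ ((d:ℝ)) * (M ^ (-γ) * max ((2:ℝ)^γ) ((2:ℝ)^(-γ)))) := by
            have h0 : (0:ℝ) ≤ κ * (3:ℝ) ^ ((d:ℝ) - γ) := by positivity
            have h0' : (0:ℝ) ≤ R ^ ((d:ℝ)) := by positivity
            exact mul_le_mul_of_nonneg_left (mul_le_mul_of_nonneg_left hb h0') h0
        _ = (κ * (3:ℝ) ^ ((d:ℝ) - γ) * max ((2:ℝ)^γ) ((2:ℝ)^(-γ))) * R ^ ((d:ℝ)) * M ^ (-γ) := by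
            ring
        _ ≤ C * R ^ ((d:ℝ)) * M ^ (-γ) := by
            have : κ * (3:ℝ) ^ ((d:ℝ) - γ) * max ((2:ℝ)^γ) ((2:ℝ)^(-γ)) ≤ C := le_max_left _ _
            have h0 : (0:ℝ) ≤ R ^ ((d:ℝ)) * M ^ (-γ) := by positivity
            calc κ * (3:ℝ) ^ ((d:ℝ) - γ) * max ((2:ℝ)^γ) ((2:ℝ)^(-γ)) * R ^ ((d:ℝ)) * M ^ (-γ)
                = (κ * (3:ℝ) ^ ((d:ℝ) - γ) * max ((2:ℝ)^γ) ((2:ℝ)^(-γ))) * (R ^ ((d:ℝ)) * M ^ (-γ)) := by ring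
              _ ≤ C * (R ^ ((d:ℝ)) * M ^ (-γ)) := mul_le_mul_of_nonneg_right this h0
              _ = C * R ^ ((d:ℝ)) * M ^ (-γ) := by ring
    · have hMx : M = ‖x₀‖ := max_eq_left (by linarith)
      have hbound : ∀ x ∈ ball x₀ R,
          ‖(‖x‖ : ℝ) ^ (-γ)‖ ≤ M ^ (-γ) * max ((2:ℝ)^γ) (((3:ℝ)/2)^(-γ)) := by
        intro x hx
        rw [mem_ball, dist_eq_norm] at hx
        have habs := abs_norm_sub_norm_le x x₀
        rw [abs_le] at habs
        have hlo : M/2 ≤ ‖x‖ := by rw [hMx] at *; linarith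
        have hhi : ‖x‖ ≤ (3/2)*M := by rw [hMx] at *; linarith
        rw [Real.norm_eq_abs, abs_of_nonneg (Real.rpow_nonneg (norm_nonneg x) _)]
        have e4 : (M/2) ^ (-γ) = M ^ (-γ) * (2:ℝ)^γ := by
          rw [Real.div_rpow hMne (by norm_num), div_eq_mul_inv,
            ← Real.rpow_neg (by norm_num), neg_neg]
        have e3 : ((3/2)*M) ^ (-γ) = M ^ (-γ) * ((3:ℝ)/2)^(-γ) := by
          rw [Real.mul_rpow (by norm_num) hMne]; ring
        calc (‖x‖ : ℝ) ^ (-γ) ≤ max ((M/2) ^ (-γ)) (((3/2)*M) ^ (-γ)) :=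
              wmb_rpow_le_max γ (by positivity) hlo hhi
          _ = M ^ (-γ) * max ((2:ℝ)^γ) (((3:ℝ)/2)^(-γ)) := by
              rw [e4, e3, ← mul_max_of_nonneg _ _ (Real.rpow_nonneg hMne (-γ))]
      have hvol : (volume (ball x₀ R)).toReal = R^d * v := by
        rw [Measure.addHaar_ball volume x₀ hR.le, hdim,
          ENNReal.toReal_mul, ENNReal.toReal_ofReal (by positivity)]
      have hnorm := norm_setIntegral_le_of_norm_le_const_ae' (measure_ball_lt_top (μ := (volume : Measure E)) (x := x₀) (r := R))
        (Filter.Eventually.of_forall hbound)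
      calc ∫ x in ball x₀ R, ‖x‖ ^ (-γ)
          ≤ ‖∫ x in ball x₀ R, ‖x‖ ^ (-γ)‖ := le_abs_self _
        _ ≤ (M ^ (-γ) * max ((2:ℝ)^γ) (((3:ℝ)/2)^(-γ))) * (volume (ball x₀ R)).toReal := hnorm
        _ = (v * max ((2:ℝ)^γ) (((3:ℝ)/2)^(-γ))) * R ^ ((d:ℝ)) * M ^ (-γ) := by
            rw [hvol, Real.rpow_natCast]; ring
        _ ≤ C * R ^ ((d:ℝ)) * M ^ (-γ) := by
            have hle : v * max ((2:ℝ)^γ) (((3:ℝ)/2)^(-γ)) ≤ C := le_max_right _ _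
            have h0 : (0:ℝ) ≤ R ^ ((d:ℝ)) * M ^ (-γ) := by positivity
            calc (v * max ((2:ℝ)^γ) (((3:ℝ)/2)^(-γ))) * R ^ ((d:ℝ)) * M ^ (-γ)
                = (v * max ((2:ℝ)^γ) (((3:ℝ)/2)^(-γ))) * (R ^ ((d:ℝ)) * M ^ (-γ)) := by ring
              _ ≤ C * (R ^ ((d:ℝ)) * M ^ (-γ)) := mul_le_mul_of_nonneg_right hle h0
              _ = C * R ^ ((d:ℝ)) * M ^ (-γ) := by ring
end

section
/- (a) ∫_{ℝ^d} |x|^{2/(1−m)} f(x) dx < ∞; (b) f satisfies the integral tail condition: sup_{R>0} R^{2/(1−m)−d} ∫_{{|x| ≥ R}} f(x) dx < ∞; (c) nevertheless f fails every pointwise Barenblatt-type decay bound: limsup_{|x|→∞} |x|^{2/(1−m)} f(x) = +∞, i.e. for all A > 0 and R > 0 there exists x ∈ ℝ^d with |x| ≥ R and f(x) > A |x|^{−2/(1−m)}. -/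
open MeasureTheory Real

/-- The function `f = Σ_{N≥2} N^{-(2/(1-m)-1)} 1_{B_{N^{-2}}((N,0,…,0))}` has finite
`(2/(1-m))`-moment and satisfies the integral tail condition, yet fails every pointwise
Barenblatt-type decay bound. -/
theorem bad_function_in_X
    (d : ℕ) (hd : 3 ≤ d) (m : ℝ)
    (hm1 : ((d : ℝ) - 2) / d < m) (hm2 : m < 1)
    (f : EuclideanSpace ℝ (Fin d) → ℝ)
    (hf : ∀ x : EuclideanSpace ℝ (Fin d),
      f x = ∑' N : ℕ, Set.indicator
        (Metric.ball
          (EuclideanSpace.single (⟨0, by omega⟩ : Fin d) (((N + 2 : ℕ) : ℝ)))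
          (((N + 2 : ℕ) : ℝ) ^ (-2 : ℝ)))
        (fun _ => ((N + 2 : ℕ) : ℝ) ^ (-(2 / (1 - m) - 1))) x) :
    (∫⁻ x : EuclideanSpace ℝ (Fin d),
        ENNReal.ofReal (‖x‖ ^ (2 / (1 - m)) * f x) < ⊤) ∧
    BddAbove {y : ℝ | ∃ R : ℝ, 0 < R ∧
        y = R ^ (2 / (1 - m) - (d : ℝ)) *
          ∫ x in {x : EuclideanSpace ℝ (Fin d) | R ≤ ‖x‖}, f x} ∧
    (∀ A > (0 : ℝ), ∀ R > (0 : ℝ), ∃ x : EuclideanSpace ℝ (Fin d),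
      R ≤ ‖x‖ ∧ A * ‖x‖ ^ (-(2 / (1 - m))) < f x) := by
  classical
  haveI : NeZero d := ⟨by omega⟩
  have h1m : (0:ℝ) < 1 - m := by linarith
  have hd0 : (0:ℝ) < (d:ℝ) := by
    have : (0:ℕ) < d := by omega
    exact_mod_cast this
  have hd3 : (3:ℝ) ≤ (d:ℝ) := by exact_mod_cast hd
  set p : ℝ := 2 / (1 - m) with hp
  have hdp : (d:ℝ) < p := by
    rw [hp, lt_div_iff₀ h1m]
    have h := (div_lt_iff₀ hd0).mp hm1
    nlinarith
  have hp0 : (0:ℝ) < p := by linarith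
  have hb2 : ∀ N : ℕ, (2:ℝ) ≤ ((N + 2 : ℕ) : ℝ) := by
    intro N; exact_mod_cast Nat.le_add_left 2 N
  have hb0 : ∀ N : ℕ, (0:ℝ) < ((N + 2 : ℕ) : ℝ) := fun N => lt_of_lt_of_le two_pos (hb2 N)
  set c : ℕ → EuclideanSpace ℝ (Fin d) :=
    fun N => EuclideanSpace.single (⟨0, by omega⟩ : Fin d) (((N + 2 : ℕ) : ℝ)) with hc
  set r : ℕ → ℝ := fun N => ((N + 2 : ℕ) : ℝ) ^ (-2 : ℝ) with hrdef
  set w : ℕ → ℝ := fun N => ((N + 2 : ℕ) : ℝ) ^ (-(p - 1)) with hwdef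
  have hfF : ∀ x, f x = ∑' N : ℕ,
      Set.indicator (Metric.ball (c N) (r N)) (fun _ => w N) x := fun x => hf x
  have hr_pos : ∀ N, 0 < r N := fun N => Real.rpow_pos_of_pos (hb0 N) _
  have hr_le : ∀ N, r N ≤ 1/4 := by
    intro N
    have h4 : (4:ℝ) ≤ ((N + 2 : ℕ) : ℝ) ^ (2:ℕ) := by
      have := hb2 N; nlinarith
    have heq : r N = (((N + 2 : ℕ) : ℝ) ^ (2:ℕ))⁻¹ := by
      have h0 : r N = ((N + 2 : ℕ) : ℝ) ^ (-2:ℝ) := rfl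
      rw [h0, show (-2:ℝ) = -(((2:ℕ)):ℝ) by norm_num, Real.rpow_neg (hb0 N).le,
        Real.rpow_natCast]
    rw [heq]
    rw [show (1:ℝ)/4 = ((4:ℝ))⁻¹ by norm_num]
    exact inv_anti₀ (by norm_num) h4
  have hw_nonneg : ∀ N, 0 ≤ w N := fun N => Real.rpow_nonneg (hb0 N).le _
  have hcnorm : ∀ N, ‖c N‖ = ((N + 2 : ℕ) : ℝ) := by
    intro N
    rw [show c N = EuclideanSpace.single (⟨0, by omega⟩ : Fin d) (((N + 2 : ℕ) : ℝ)) from rfl,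
      EuclideanSpace.norm_single]
    exact abs_of_nonneg (hb0 N).le
  have hnorm_ball : ∀ N x, x ∈ Metric.ball (c N) (r N) →
      1 ≤ ‖x‖ ∧ ‖x‖ ≤ 2 * ((N + 2 : ℕ) : ℝ) := by
    intro N x hx
    rw [Metric.mem_ball, dist_eq_norm] at hx
    have ht1 : ‖c N‖ - ‖x‖ ≤ ‖x - c N‖ := by
      have := norm_sub_norm_le (c N) x
      rw [norm_sub_rev] at this
      linarith
    have ht2 : ‖x‖ - ‖c N‖ ≤ ‖x - c N‖ := norm_sub_norm_le x (c N)
    have hcn := hcnorm N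
    have := hr_le N
    have := hb2 N
    constructor <;> [skip; skip] <;> rw [hcn] at ht1 ht2 <;> linarith
  have hdisj : ∀ (x : EuclideanSpace ℝ (Fin d)) (N M : ℕ), N ≠ M →
      x ∈ Metric.ball (c N) (r N) → x ∉ Metric.ball (c M) (r M) := by
    intro x N M hNM hxN hxM
    rw [Metric.mem_ball] at hxN hxM
    have htri : dist (c N) (c M) ≤ dist (c N) x + dist x (c M) := dist_triangle _ _ _
    have h1 : dist (c N) (c M) = |((N + 2 : ℕ) : ℝ) - ((M + 2 : ℕ) : ℝ)| := by
      rw [show c N = EuclideanSpace.single (⟨0, by omega⟩ : Fin d) (((N + 2 : ℕ) : ℝ)) from rfl,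
        show c M = EuclideanSpace.single (⟨0, by omega⟩ : Fin d) (((M + 2 : ℕ) : ℝ)) from rfl,
        EuclideanSpace.dist_single_same, Real.dist_eq]
    have h2' : (1:ℤ) ≤ |(N:ℤ) - (M:ℤ)| :=
      Int.one_le_abs (sub_ne_zero.mpr (by exact_mod_cast hNM))
    have h2 : (1:ℝ) ≤ |((N + 2 : ℕ) : ℝ) - ((M + 2 : ℕ) : ℝ)| := by
      have : ((N + 2 : ℕ) : ℝ) - ((M + 2 : ℕ) : ℝ) = ((((N:ℤ) - (M:ℤ)) : ℤ) : ℝ) := by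
        push_cast; ring
      rw [this, ← Int.cast_abs]
      exact_mod_cast h2'
    have hdxN : dist (c N) x < r N := by rwa [dist_comm]
    have hlt : dist (c N) x + dist x (c M) < 1/2 := by
      linarith [hr_le N, hr_le M]
    have hhalf : dist (c N) (c M) < 1/2 := lt_of_le_of_lt htri hlt
    rw [h1] at hhalf
    linarith
  have hsummable : ∀ x, Summable
      (fun N => Set.indicator (Metric.ball (c N) (r N)) (fun _ => w N) x) := by
    intro x
    by_cases hx : ∃ N, x ∈ Metric.ball (c N) (r N)
    · obtain ⟨N0, hN0⟩ := hx
      apply summable_of_ne_finset_zero (s := {N0})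
      intro N hN
      simp only [Finset.mem_singleton] at hN
      exact Set.indicator_of_notMem (hdisj x N0 N (fun h => hN h.symm) hN0) _
    · apply summable_of_ne_finset_zero (s := (∅ : Finset ℕ))
      intro N _
      exact Set.indicator_of_notMem (fun h => hx ⟨N, h⟩) _
  have hind_nonneg : ∀ N (x : EuclideanSpace ℝ (Fin d)),
      0 ≤ Set.indicator (Metric.ball (c N) (r N)) (fun _ => w N) x :=
    fun N x => Set.indicator_nonneg (fun _ _ => hw_nonneg N) x
  have hf_nonneg : ∀ x, 0 ≤ f x := fun x => by
    rw [hfF x]; exact tsum_nonneg (fun N => hind_nonneg N x)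
  have hofReal : ∀ x, ENNReal.ofReal (f x) =
      ∑' N, ENNReal.ofReal (Set.indicator (Metric.ball (c N) (r N)) (fun _ => w N) x) := by
    intro x
    rw [hfF x]
    exact ENNReal.ofReal_tsum_of_nonneg (fun N => hind_nonneg N x) (hsummable x)
  have hFmeas : ∀ N, Measurable
      (fun x : EuclideanSpace ℝ (Fin d) =>
        Set.indicator (Metric.ball (c N) (r N)) (fun _ => w N) x) :=
    fun N => measurable_const.indicator measurableSet_ball
  have hf_meas : Measurable f := by
    have hfeq : f = fun x => (∑' N, ENNReal.ofReal
        (Set.indicator (Metric.ball (c N) (r N)) (fun _ => w N) x)).toReal := by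
      funext x
      rw [← hofReal x, ENNReal.toReal_ofReal (hf_nonneg x)]
    rw [hfeq]
    exact (Measurable.ennreal_tsum (fun N => (hFmeas N).ennreal_ofReal)).ennreal_toReal
  -- Part (a)
  set V := volume (Metric.ball (0 : EuclideanSpace ℝ (Fin d)) 1) with hVdef
  have hV : V < ⊤ := measure_ball_lt_top
  have hvol : ∀ N, volume (Metric.ball (c N) (r N)) = ENNReal.ofReal (r N ^ d) * V := by
    intro N
    rw [hVdef, Measure.addHaar_ball volume (c N) (hr_pos N).le, finrank_euclideanSpace_fin]
  have key : (∫⁻ x : EuclideanSpace ℝ (Fin d),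
      ENNReal.ofReal (‖x‖ ^ p * f x)) < ⊤ := by
    have hpt : ∀ x : EuclideanSpace ℝ (Fin d), ENNReal.ofReal (‖x‖ ^ p * f x) ≤
        ∑' N, Set.indicator (Metric.ball (c N) (r N))
          (fun _ => ENNReal.ofReal ((2 * ((N + 2 : ℕ) : ℝ)) ^ p * w N)) x := by
      intro x
      have h1 : ‖x‖ ^ p * f x = ∑' N, ‖x‖ ^ p *
          Set.indicator (Metric.ball (c N) (r N)) (fun _ => w N) x := by
        rw [hfF x, ← tsum_mul_left]
      rw [h1, ENNReal.ofReal_tsum_of_nonneg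
        (fun N => mul_nonneg (Real.rpow_nonneg (norm_nonneg x) p) (hind_nonneg N x))
        ((hsummable x).mul_left _)]
      apply ENNReal.tsum_le_tsum
      intro N
      by_cases hx : x ∈ Metric.ball (c N) (r N)
      · rw [Set.indicator_of_mem hx, Set.indicator_of_mem hx]
        apply ENNReal.ofReal_le_ofReal
        exact mul_le_mul_of_nonneg_right
          (Real.rpow_le_rpow (norm_nonneg x) (hnorm_ball N x hx).2 hp0.le)
          (hw_nonneg N)
      · rw [Set.indicator_of_notMem hx, Set.indicator_of_notMem hx, mul_zero,
          ENNReal.ofReal_zero]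
    have hle : (∫⁻ x : EuclideanSpace ℝ (Fin d), ENNReal.ofReal (‖x‖ ^ p * f x)) ≤
        ∑' N, ENNReal.ofReal ((2 * ((N + 2 : ℕ) : ℝ)) ^ p * w N) *
          (ENNReal.ofReal (r N ^ d) * V) := by
      calc (∫⁻ x : EuclideanSpace ℝ (Fin d), ENNReal.ofReal (‖x‖ ^ p * f x))
          ≤ ∫⁻ x, ∑' N, Set.indicator (Metric.ball (c N) (r N))
            (fun _ => ENNReal.ofReal ((2 * ((N + 2 : ℕ) : ℝ)) ^ p * w N)) x :=
            lintegral_mono hpt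
        _ = ∑' N, ∫⁻ x, Set.indicator (Metric.ball (c N) (r N))
            (fun _ => ENNReal.ofReal ((2 * ((N + 2 : ℕ) : ℝ)) ^ p * w N)) x :=
            lintegral_tsum (fun N =>
              (measurable_const.indicator measurableSet_ball).aemeasurable)
        _ = ∑' N, ENNReal.ofReal ((2 * ((N + 2 : ℕ) : ℝ)) ^ p * w N) *
            (ENNReal.ofReal (r N ^ d) * V) := by
            congr 1
            funext N
            rw [lintegral_indicator_const measurableSet_ball, hvol N]
    have hterm : ∀ N, ENNReal.ofReal ((2 * ((N + 2 : ℕ) : ℝ)) ^ p * w N) *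
        (ENNReal.ofReal (r N ^ d) * V)
        = ENNReal.ofReal (2 ^ p * ((N + 2 : ℕ) : ℝ) ^ (1 - 2 * (d:ℝ))) * V := by
      intro N
      have hb := hb0 N
      have hwr : w N = ((N + 2 : ℕ) : ℝ) ^ (-(p-1)) := rfl
      have hrr : r N = ((N + 2 : ℕ) : ℝ) ^ (-2:ℝ) := rfl
      have hnn : (0:ℝ) ≤ (2 * ((N + 2 : ℕ) : ℝ)) ^ p * w N :=
        mul_nonneg (Real.rpow_nonneg (by linarith) p) (hw_nonneg N)
      rw [← mul_assoc, ← ENNReal.ofReal_mul hnn]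
      congr 2
      calc (2 * ((N + 2 : ℕ) : ℝ)) ^ p * w N * r N ^ d
          = (2 ^ p * ((N + 2 : ℕ) : ℝ) ^ p) * ((N + 2 : ℕ) : ℝ) ^ (-(p-1)) *
              ((N + 2 : ℕ) : ℝ) ^ ((-2 : ℝ) * ((d:ℕ) : ℝ)) := by
            rw [Real.mul_rpow (by norm_num) hb.le, hwr, hrr,
              ← Real.rpow_natCast (((N + 2 : ℕ) : ℝ) ^ (-2:ℝ)) d,
              ← Real.rpow_mul hb.le]
        _ = 2 ^ p * (((N + 2 : ℕ) : ℝ) ^ p * ((N + 2 : ℕ) : ℝ) ^ (-(p-1)) *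
              ((N + 2 : ℕ) : ℝ) ^ ((-2 : ℝ) * ((d:ℕ) : ℝ))) := by ring
        _ = 2 ^ p * ((N + 2 : ℕ) : ℝ) ^ (p + -(p-1) + (-2 : ℝ) * ((d:ℕ) : ℝ)) := by
            rw [← Real.rpow_add hb, ← Real.rpow_add hb]
        _ = 2 ^ p * ((N + 2 : ℕ) : ℝ) ^ (1 - 2 * (d:ℝ)) := by
            rw [show p + -(p-1) + (-2 : ℝ) * ((d:ℕ) : ℝ) = 1 - 2 * (d:ℝ) from by ring]
    have hsum2 : Summable (fun N : ℕ => 2 ^ p * ((N + 2 : ℕ) : ℝ) ^ (1 - 2 * (d:ℝ))) := by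
      apply Summable.mul_left
      have h : Summable (fun n : ℕ => (n:ℝ) ^ (1 - 2 * (d:ℝ))) :=
        Real.summable_nat_rpow.2 (by linarith)
      exact (_root_.summable_nat_add_iff (f := fun n : ℕ => (n:ℝ) ^ (1 - 2 * (d:ℝ))) 2).2 h
    have hfin : (∑' N, ENNReal.ofReal
        (2 ^ p * ((N + 2 : ℕ) : ℝ) ^ (1 - 2 * (d:ℝ))) * V) < ⊤ := by
      rw [ENNReal.tsum_mul_right,
        ← ENNReal.ofReal_tsum_of_nonneg
          (fun N => by positivity) hsum2]
      exact ENNReal.mul_lt_top ENNReal.ofReal_lt_top hV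
    calc (∫⁻ x : EuclideanSpace ℝ (Fin d), ENNReal.ofReal (‖x‖ ^ p * f x))
        ≤ ∑' N, ENNReal.ofReal ((2 * ((N + 2 : ℕ) : ℝ)) ^ p * w N) *
          (ENNReal.ofReal (r N ^ d) * V) := hle
      _ = ∑' N, ENNReal.ofReal (2 ^ p * ((N + 2 : ℕ) : ℝ) ^ (1 - 2 * (d:ℝ))) * V := by
          congr 1; funext N; exact hterm N
      _ < ⊤ := hfin
  -- g := weighted f, integrability
  set g : EuclideanSpace ℝ (Fin d) → ℝ := fun x => ‖x‖ ^ p * f x with hgdef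
  have hg_nonneg : ∀ x, 0 ≤ g x :=
    fun x => mul_nonneg (Real.rpow_nonneg (norm_nonneg x) p) (hf_nonneg x)
  have hg_meas : Measurable g :=
    ((Real.continuous_rpow_const hp0.le).measurable.comp measurable_norm).mul hf_meas
  have hg_int : Integrable g := by
    refine ⟨hg_meas.aestronglyMeasurable, ?_⟩
    rw [hasFiniteIntegral_iff_norm]
    have heq : (fun a => ENNReal.ofReal ‖g a‖) = fun a => ENNReal.ofReal (g a) :=
      funext fun a => by rw [Real.norm_of_nonneg (hg_nonneg a)]
    calc (∫⁻ a, ENNReal.ofReal ‖g a‖) = ∫⁻ a, ENNReal.ofReal (g a) := by rw [heq]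
      _ < ⊤ := key
  have hfg_le : ∀ x, f x ≤ g x := by
    intro x
    rcases eq_or_lt_of_le (hf_nonneg x) with h0 | h0
    · have : g x = ‖x‖ ^ p * f x := rfl
      rw [this, ← h0, mul_zero]
    · have hex : ∃ N, x ∈ Metric.ball (c N) (r N) := by
        by_contra hno
        push_neg at hno
        have hzero : f x = 0 := by
          rw [hfF x]
          have : ∀ N : ℕ, Set.indicator (Metric.ball (c N) (r N)) (fun _ => w N) x = 0 :=
            fun N => Set.indicator_of_notMem (hno N) _
          rw [tsum_congr this, tsum_zero]
        linarith
      obtain ⟨N, hN⟩ := hex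
      have h1 : 1 ≤ ‖x‖ ^ p := by
        have := Real.rpow_le_rpow zero_le_one (hnorm_ball N x hN).1 hp0.le
        rwa [Real.one_rpow] at this
      have h2 := mul_le_mul_of_nonneg_right h1 (hf_nonneg x)
      show f x ≤ ‖x‖ ^ p * f x
      nlinarith [hf_nonneg x]
  have hf_int : Integrable f :=
    hg_int.mono' hf_meas.aestronglyMeasurable
      (Filter.Eventually.of_forall fun x => by
        rw [Real.norm_of_nonneg (hf_nonneg x)]; exact hfg_le x)
  set M : ℝ := ∫ x, g x with hM
  have hM0 : 0 ≤ M := integral_nonneg hg_nonneg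
  refine ⟨key, ⟨M, ?_⟩, ?_⟩
  · -- Part (b)
    rintro y ⟨R, hR, rfl⟩
    set S := {x : EuclideanSpace ℝ (Fin d) | R ≤ ‖x‖} with hS
    have hSmeas : MeasurableSet S := measurableSet_le measurable_const measurable_norm
    have hint_fS : IntegrableOn f S := hf_int.integrableOn
    have hint_gS : IntegrableOn g S := hg_int.integrableOn
    have hSg_le : ∫ x in S, g x ≤ M := by
      rw [hM]
      exact setIntegral_le_integral hg_int (Filter.Eventually.of_forall hg_nonneg)
    have hSf_nonneg : 0 ≤ ∫ x in S, f x :=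
      setIntegral_nonneg hSmeas (fun x _ => hf_nonneg x)
    have hSg_nonneg : 0 ≤ ∫ x in S, g x :=
      setIntegral_nonneg hSmeas (fun x _ => hg_nonneg x)
    rcases le_or_gt R 1 with hR1 | hR1
    · have h1 : R ^ (p - (d:ℝ)) ≤ 1 := Real.rpow_le_one hR.le hR1 (by linarith)
      have h2 : ∫ x in S, f x ≤ ∫ x in S, g x :=
        setIntegral_mono_on hint_fS hint_gS hSmeas (fun x _ => hfg_le x)
      calc R ^ (p - (d:ℝ)) * ∫ x in S, f x
          ≤ 1 * ∫ x in S, f x := mul_le_mul_of_nonneg_right h1 hSf_nonneg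
        _ = ∫ x in S, f x := one_mul _
        _ ≤ ∫ x in S, g x := h2
        _ ≤ M := hSg_le
    · have hRp : (0:ℝ) < R ^ p := Real.rpow_pos_of_pos hR _
      have h2 : ∫ x in S, f x ≤ ∫ x in S, R ^ (-p) * g x := by
        apply setIntegral_mono_on hint_fS (hint_gS.const_mul _) hSmeas
        intro x hx
        have hxR : R ≤ ‖x‖ := hx
        have h3 : R ^ p ≤ ‖x‖ ^ p := Real.rpow_le_rpow hR.le hxR hp0.le
        have h4 : R ^ p * f x ≤ ‖x‖ ^ p * f x :=
          mul_le_mul_of_nonneg_right h3 (hf_nonneg x)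
        have hgx : g x = ‖x‖ ^ p * f x := rfl
        rw [hgx, Real.rpow_neg hR.le, inv_mul_eq_div, le_div_iff₀ hRp]
        linarith
      have h4 : ∫ x in S, R ^ (-p) * g x = R ^ (-p) * ∫ x in S, g x :=
        integral_const_mul _ _
      have h5 : R ^ (-p) * ∫ x in S, g x ≤ R ^ (-p) * M :=
        mul_le_mul_of_nonneg_left hSg_le (Real.rpow_nonneg hR.le _)
      calc R ^ (p - (d:ℝ)) * ∫ x in S, f x
          ≤ R ^ (p - (d:ℝ)) * (R ^ (-p) * M) := by
            apply mul_le_mul_of_nonneg_left _ (Real.rpow_nonneg hR.le _)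
            exact h2.trans (by rw [h4]; exact h5)
        _ = R ^ (-(d:ℝ)) * M := by
            rw [← mul_assoc, ← Real.rpow_add hR,
              show p - (d:ℝ) + -p = -(d:ℝ) from by ring]
        _ ≤ 1 * M := mul_le_mul_of_nonneg_right
            (Real.rpow_le_one_of_one_le_of_nonpos hR1.le (by linarith)) hM0
        _ = M := one_mul M
  · -- Part (c)
    intro A hA R hR
    set K : ℕ := ⌈max A R⌉₊ with hK
    have hmaxK : max A R ≤ (K:ℝ) := Nat.le_ceil _
    have hKb : ((K + 2 : ℕ) : ℝ) = (K:ℝ) + 2 := by push_cast; ring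
    refine ⟨c K, ?_, ?_⟩
    · rw [hcnorm K, hKb]
      have := le_max_right A R
      linarith
    · have hmem : c K ∈ Metric.ball (c K) (r K) := Metric.mem_ball_self (hr_pos K)
      have hfc : f (c K) = w K := by
        rw [hfF (c K)]
        rw [tsum_eq_single K (fun M hMK =>
          Set.indicator_of_notMem (hdisj (c K) K M (fun h => hMK h.symm) hmem) _)]
        exact Set.indicator_of_mem hmem _
      rw [hfc, hcnorm K]
      have hb : (0:ℝ) < ((K + 2 : ℕ) : ℝ) := hb0 K
      have hAK : A < ((K + 2 : ℕ) : ℝ) := by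
        have := le_max_left A R
        rw [hKb]
        linarith
      have ht : (0:ℝ) < ((K + 2 : ℕ) : ℝ) ^ (-p) := Real.rpow_pos_of_pos hb _
      have hwK : w K = ((K + 2 : ℕ) : ℝ) * ((K + 2 : ℕ) : ℝ) ^ (-p) := by
        have : w K = ((K + 2 : ℕ) : ℝ) ^ (-(p-1)) := rfl
        rw [this, show -(p - 1) = 1 + -p by ring, Real.rpow_add hb, Real.rpow_one]
      rw [hwK]
      exact mul_lt_mul_of_pos_right hAK ht
end

section
/- There exists B_0 > 0 such that for every B ≥ B_0 there exist t_0 > 0 and c > 0 with the following property: for every t ≥ t_0 and every x ∈ ℝ^d with D(t) ≤ |x|² ≤ 2 D(t), one has V̲(t,x) > 𝔅(t,x) and V̲(t,x) − 𝔅(t,x) > c t^{−α/(1−α(1−m))}. -/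
open MeasureTheory Real

set_option maxHeartbeats 1000000 in
/-- For `B` large, the subsolution `V̲` eventually exceeds the Barenblatt profile `𝔅` on the
annulus `D(t) ≤ |x|² ≤ 2D(t)`, with a quantitative gap `c t^{-α/(1-α(1-m))}`. -/
theorem subsolution_exceeds_barenblatt
    (d : ℕ) (hd : 3 ≤ d) (m : ℝ)
    (hm1 : ((d : ℝ) - 2) / d < m) (hm2 : m < 1)
    (ϑ : ℝ) (hϑ : ϑ = 1 / ((d : ℝ) * m - (d : ℝ) + 2))
    (ε : ℝ) (hε0 : 0 < ε) (hε1 : ε < 2 / (1 - m) - (d : ℝ))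
    (α : ℝ) (hα : α = 1 / (1 - m) - ε / 2)
    (b₀ b₁ : ℝ) (hb₀ : 0 < b₀) (hb₁ : 0 < b₁)
    (𝔅 : ℝ → EuclideanSpace ℝ (Fin d) → ℝ)
    (h𝔅 : ∀ t : ℝ, ∀ x : EuclideanSpace ℝ (Fin d),
      𝔅 t x = t ^ (1 / (1 - m)) * (b₀ * t ^ (2 * ϑ) + b₁ * ‖x‖ ^ 2) ^ (-(1 / (1 - m)))) :
    ∃ B₀ > (0 : ℝ), ∀ B : ℝ, B₀ ≤ B → ∀ A > (0 : ℝ),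
      ∀ D : ℝ → ℝ, ∀ V : ℝ → EuclideanSpace ℝ (Fin d) → ℝ,
      A * (∫ y : EuclideanSpace ℝ (Fin d), (1 + ‖y‖ ^ 2) ^ (-α)) = B ^ ((d : ℝ) / 2) →
      (∀ t : ℝ, D t =
        (2 * A ^ (m - 1) * m * B * (d : ℝ) * (1 - α * (1 - m)) * t + 1) ^
          (1 / (1 - α * (1 - m)))) →
      (∀ t : ℝ, ∀ x : EuclideanSpace ℝ (Fin d), V t x = A * (D t + B * ‖x‖ ^ 2) ^ (-α)) →
      ∃ t₀ > (0 : ℝ), ∃ c > (0 : ℝ), ∀ t ≥ t₀, ∀ x : EuclideanSpace ℝ (Fin d),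
        D t ≤ ‖x‖ ^ 2 → ‖x‖ ^ 2 ≤ 2 * D t →
        𝔅 t x < V t x ∧
          c * t ^ (-(α / (1 - α * (1 - m)))) < V t x - 𝔅 t x := by
  have hd3 : (3 : ℝ) ≤ (d : ℝ) := by exact_mod_cast hd
  have hdpos : (0 : ℝ) < d := by linarith
  have hm0 : 0 < m := lt_trans (div_pos (by linarith) hdpos) hm1
  have h1m : 0 < 1 - m := by linarith
  set γ : ℝ := 1 / (1 - m) with hγdef
  have hγ0 : 0 < γ := by rw [hγdef]; positivity
  have h2γ : 2 / (1 - m) = 2 * γ := by rw [hγdef]; ring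
  have hα0 : 0 < α := by rw [hα]; rw [h2γ] at hε1; linarith
  have hεm : γ - α = ε / 2 := by rw [hα]; ring
  set s : ℝ := 1 - α * (1 - m) with hs
  have hsval : s = ε * (1 - m) / 2 := by
    rw [hs, hα, hγdef]; field_simp; ring
  have hs0 : 0 < s := by rw [hsval]; positivity
  have hγα : γ - α = s * γ := by
    rw [hεm, hsval, hγdef]; field_simp
  set c₁ : ℝ := 2 * m * (d : ℝ) * s * b₁ with hc₁def
  have hc₁ : 0 < c₁ := by positivity
  have hc₁γ : 0 < c₁ ^ γ := Real.rpow_pos_of_pos hc₁ γ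
  set M : ℝ := 2 * (3 : ℝ) ^ α / c₁ ^ γ with hMdef
  have hM : 0 < M := by positivity
  refine ⟨max 1 (M ^ (2 / ε)), lt_of_lt_of_le one_pos (le_max_left _ _), ?_⟩
  intro B hB A hA D V _ hD hV
  have hB1 : (1 : ℝ) ≤ B := le_trans (le_max_left _ _) hB
  have hB0 : 0 < B := by linarith
  -- key inequality on B
  have hBkey : 2 * (1 + 2 * B) ^ α ≤ (c₁ * B) ^ γ := by
    have h2 : M ^ (2 / ε) ≤ B := le_trans (le_max_right _ _) hB
    have hεε : (2 / ε) * (ε / 2) = 1 := by field_simp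
    have h3 : M ≤ B ^ (ε / 2) := by
      calc M = (M ^ (2 / ε)) ^ (ε / 2) := by
              rw [← Real.rpow_mul hM.le, hεε, Real.rpow_one]
        _ ≤ B ^ (ε / 2) :=
            Real.rpow_le_rpow (Real.rpow_nonneg hM.le _) h2 (by positivity)
    have h4 : B ^ γ = B ^ α * B ^ (ε / 2) := by
      rw [← Real.rpow_add hB0]; congr 1; linarith
    have h5 : (1 + 2 * B) ^ α ≤ (3 * B) ^ α :=
      Real.rpow_le_rpow (by linarith) (by linarith) hα0.le
    have h6 : (3 * B : ℝ) ^ α = 3 ^ α * B ^ α := Real.mul_rpow (by norm_num) hB0.le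
    have hBα : (0 : ℝ) < B ^ α := Real.rpow_pos_of_pos hB0 α
    calc 2 * (1 + 2 * B) ^ α ≤ 2 * (3 ^ α * B ^ α) := by rw [← h6]; linarith only [h5]
      _ = M * c₁ ^ γ * B ^ α := by rw [hMdef]; field_simp
      _ ≤ B ^ (ε / 2) * c₁ ^ γ * B ^ α := by
          exact mul_le_mul_of_nonneg_right
            (mul_le_mul_of_nonneg_right h3 hc₁γ.le) hBα.le
      _ = c₁ ^ γ * B ^ γ := by rw [h4]; ring
      _ = (c₁ * B) ^ γ := (Real.mul_rpow hc₁.le hB0.le).symm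
  have hBkey' : 2 ≤ (1 + 2 * B) ^ (-α) * (c₁ * B) ^ γ := by
    have h12Bpos : (0 : ℝ) < (1 + 2 * B) ^ α := Real.rpow_pos_of_pos (by linarith) α
    rw [Real.rpow_neg (by linarith : (0:ℝ) ≤ 1 + 2 * B), inv_mul_eq_div,
      le_div_iff₀ h12Bpos]
    linarith only [hBkey]
  set K : ℝ := 2 * A ^ (m - 1) * m * B * (d : ℝ) * s with hKdef
  have hArp : 0 < A ^ (m - 1) := Real.rpow_pos_of_pos hA _
  have hK : 0 < K := by rw [hKdef]; positivity
  have hKb : K * b₁ = A ^ (m - 1) * (c₁ * B) := by rw [hKdef, hc₁def]; ring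
  have hexp : (m - 1) * γ = -1 := by rw [hγdef]; field_simp; ring
  have hAm : A * (A ^ (m - 1)) ^ γ = 1 := by
    rw [← Real.rpow_mul hA.le, hexp, Real.rpow_neg_one, mul_inv_cancel₀ hA.ne']
  have hAK : A * (K ^ γ * b₁ ^ γ) = (c₁ * B) ^ γ := by
    rw [← Real.mul_rpow hK.le hb₁.le, hKb,
      Real.mul_rpow hArp.le (by positivity : (0:ℝ) ≤ c₁ * B), ← mul_assoc, hAm, one_mul]
  refine ⟨1, one_pos,
    A / 4 * (1 + 2 * B) ^ (-α) * (K + 1) ^ (-(α / s)), by positivity, ?_⟩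
  intro t ht x hx1 hx2
  have ht0 : 0 < t := lt_of_lt_of_le one_pos ht
  have hr0 : (0 : ℝ) ≤ ‖x‖ ^ 2 := by positivity
  have hDt : D t = (K * t + 1) ^ (1 / s) := hD t
  have hKt1 : (1 : ℝ) ≤ K * t + 1 := by
    have : 0 ≤ K * t := mul_nonneg hK.le ht0.le
    linarith
  have hKt0 : (0 : ℝ) < K * t + 1 := by linarith only [hKt1]
  have hDt1 : (1 : ℝ) ≤ D t := by
    rw [hDt]
    calc (1 : ℝ) = 1 ^ (1 / s) := (Real.one_rpow _).symm
      _ ≤ (K * t + 1) ^ (1 / s) := Real.rpow_le_rpow zero_le_one hKt1 (by positivity)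
  have hDt0 : (0 : ℝ) < D t := by linarith only [hDt1]
  -- lower bound for V
  have hbase1 : 0 < D t + B * ‖x‖ ^ 2 := by positivity
  have hbase2 : D t + B * ‖x‖ ^ 2 ≤ (1 + 2 * B) * D t := by
    have h1 : B * ‖x‖ ^ 2 ≤ B * (2 * D t) := mul_le_mul_of_nonneg_left hx2 hB0.le
    calc D t + B * ‖x‖ ^ 2 ≤ D t + B * (2 * D t) := by linarith only [h1]
      _ = (1 + 2 * B) * D t := by ring
  have hVlow : A * ((1 + 2 * B) * D t) ^ (-α) ≤ V t x := by
    rw [hV t x]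
    exact mul_le_mul_of_nonneg_left
      (Real.rpow_le_rpow_of_nonpos hbase1 hbase2 (by linarith)) hA.le
  -- upper bound for 𝔅
  have hBound𝔅 : 𝔅 t x ≤ t ^ γ * (b₁ * D t) ^ (-γ) := by
    rw [h𝔅 t x]
    refine mul_le_mul_of_nonneg_left ?_ (Real.rpow_nonneg ht0.le _)
    have ht2ϑ : 0 < t ^ (2 * ϑ) := Real.rpow_pos_of_pos ht0 _
    refine Real.rpow_le_rpow_of_nonpos (by positivity) ?_ (by linarith only [hγ0])
    have h1 : b₁ * D t ≤ b₁ * ‖x‖ ^ 2 := mul_le_mul_of_nonneg_left hx1 hb₁.le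
    have h2 : 0 < b₀ * t ^ (2 * ϑ) := mul_pos hb₀ ht2ϑ
    linarith only [h1, h2]
  -- key middle inequality
  have hDtγα : (D t) ^ (-α) = (K * t + 1) ^ γ * (D t) ^ (-γ) := by
    have h1 : (D t) ^ (γ - α) = (K * t + 1) ^ γ := by
      rw [hDt, ← Real.rpow_mul hKt0.le]
      congr 1
      rw [hγα]; field_simp
    calc (D t) ^ (-α) = (D t) ^ (γ - α + -γ) := by congr 1; ring
      _ = (D t) ^ (γ - α) * (D t) ^ (-γ) := Real.rpow_add hDt0 _ _
      _ = (K * t + 1) ^ γ * (D t) ^ (-γ) := by rw [h1]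
  have hKγ : K ^ γ * t ^ γ ≤ (K * t + 1) ^ γ := by
    rw [← Real.mul_rpow hK.le ht0.le]
    exact Real.rpow_le_rpow (by positivity) (by linarith) hγ0.le
  have h12B : (0 : ℝ) < (1 + 2 * B) ^ (-α) := Real.rpow_pos_of_pos (by linarith) _
  have hDtγ : (0 : ℝ) < (D t) ^ (-γ) := Real.rpow_pos_of_pos hDt0 _
  have hb₁γ : (0 : ℝ) < b₁ ^ γ := Real.rpow_pos_of_pos hb₁ _
  have htγ : (0 : ℝ) < t ^ γ := Real.rpow_pos_of_pos ht0 _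
  have hconst : 2 * b₁ ^ (-γ) ≤ A * (1 + 2 * B) ^ (-α) * K ^ γ := by
    have h2 : 2 ≤ A * (1 + 2 * B) ^ (-α) * K ^ γ * b₁ ^ γ := by
      have e : A * (1 + 2 * B) ^ (-α) * K ^ γ * b₁ ^ γ
          = (1 + 2 * B) ^ (-α) * (A * (K ^ γ * b₁ ^ γ)) := by ring
      rw [e, hAK]; linarith only [hBkey']
    calc 2 * b₁ ^ (-γ) = 2 * (b₁ ^ γ)⁻¹ := by rw [Real.rpow_neg hb₁.le]
      _ ≤ (A * (1 + 2 * B) ^ (-α) * K ^ γ * b₁ ^ γ) * (b₁ ^ γ)⁻¹ :=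
          mul_le_mul_of_nonneg_right h2 (by positivity)
      _ = A * (1 + 2 * B) ^ (-α) * K ^ γ := by field_simp
  have hQ : 2 * (t ^ γ * (b₁ * D t) ^ (-γ)) ≤ A * ((1 + 2 * B) * D t) ^ (-α) := by
    have e1 : ((1 + 2 * B) * D t) ^ (-α) = (1 + 2 * B) ^ (-α) * (D t) ^ (-α) :=
      Real.mul_rpow (by linarith) hDt0.le
    have e2 : (b₁ * D t) ^ (-γ) = b₁ ^ (-γ) * (D t) ^ (-γ) :=
      Real.mul_rpow hb₁.le hDt0.le
    rw [e1, e2, hDtγα]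
    have key : 2 * t ^ γ * b₁ ^ (-γ)
        ≤ A * ((1 + 2 * B) ^ (-α) * (K * t + 1) ^ γ) := by
      calc 2 * t ^ γ * b₁ ^ (-γ) = (2 * b₁ ^ (-γ)) * t ^ γ := by ring
        _ ≤ (A * (1 + 2 * B) ^ (-α) * K ^ γ) * t ^ γ :=
            mul_le_mul_of_nonneg_right hconst htγ.le
        _ = A * ((1 + 2 * B) ^ (-α) * (K ^ γ * t ^ γ)) := by ring
        _ ≤ A * ((1 + 2 * B) ^ (-α) * (K * t + 1) ^ γ) := by
            refine mul_le_mul_of_nonneg_left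
              (mul_le_mul_of_nonneg_left hKγ h12B.le) hA.le
    calc 2 * (t ^ γ * (b₁ ^ (-γ) * (D t) ^ (-γ)))
        = (2 * t ^ γ * b₁ ^ (-γ)) * (D t) ^ (-γ) := by ring
      _ ≤ (A * ((1 + 2 * B) ^ (-α) * (K * t + 1) ^ γ)) * (D t) ^ (-γ) :=
          mul_le_mul_of_nonneg_right key hDtγ.le
      _ = A * ((1 + 2 * B) ^ (-α) * ((K * t + 1) ^ γ * (D t) ^ (-γ))) := by ring
  have h𝔅V : 2 * 𝔅 t x ≤ V t x := by
    calc 2 * 𝔅 t x ≤ 2 * (t ^ γ * (b₁ * D t) ^ (-γ)) := by linarith only [hBound𝔅]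
      _ ≤ A * ((1 + 2 * B) * D t) ^ (-α) := hQ
      _ ≤ V t x := hVlow
  have h𝔅0 : 0 ≤ 𝔅 t x := by
    rw [h𝔅 t x]; positivity
  have hVpos : 0 < V t x := by
    have h : 0 < A * ((1 + 2 * B) * D t) ^ (-α) := by positivity
    linarith only [h, hVlow]
  refine ⟨by linarith only [h𝔅V, h𝔅0, hVpos], ?_⟩
  -- the quantitative gap
  have hDtneg : ((K + 1) * t) ^ (-(α / s)) ≤ (D t) ^ (-α) := by
    have e : (D t) ^ (-α) = (K * t + 1) ^ (-(α / s)) := by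
      rw [hDt, ← Real.rpow_mul hKt0.le]
      congr 1
      field_simp
    rw [e]
    refine Real.rpow_le_rpow_of_nonpos hKt0 ?_ (by rw [neg_nonpos]; positivity)
    have h1 : (K + 1) * t = K * t + t := by ring
    linarith only [h1, ht]
  have e2 : ((K + 1) * t) ^ (-(α / s)) = (K + 1) ^ (-(α / s)) * t ^ (-(α / s)) :=
    Real.mul_rpow (by positivity) ht0.le
  have hV2 : A * ((1 + 2 * B) ^ (-α) * ((K + 1) ^ (-(α / s)) * t ^ (-(α / s))))
      ≤ V t x := by
    have e1 : ((1 + 2 * B) * D t) ^ (-α) = (1 + 2 * B) ^ (-α) * (D t) ^ (-α) :=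
      Real.mul_rpow (by linarith) hDt0.le
    calc A * ((1 + 2 * B) ^ (-α) * ((K + 1) ^ (-(α / s)) * t ^ (-(α / s))))
        = A * ((1 + 2 * B) ^ (-α) * ((K + 1) * t) ^ (-(α / s))) := by rw [e2]
      _ ≤ A * ((1 + 2 * B) ^ (-α) * (D t) ^ (-α)) :=
          mul_le_mul_of_nonneg_left
            (mul_le_mul_of_nonneg_left hDtneg h12B.le) hA.le
      _ = A * ((1 + 2 * B) * D t) ^ (-α) := by rw [e1]
      _ ≤ V t x := hVlow
  have hEpos : 0 < A * ((1 + 2 * B) ^ (-α) * ((K + 1) ^ (-(α / s)) * t ^ (-(α / s)))) := by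
    positivity
  have hEq : A / 4 * (1 + 2 * B) ^ (-α) * (K + 1) ^ (-(α / s)) * t ^ (-(α / s))
      = (A * ((1 + 2 * B) ^ (-α) * ((K + 1) ^ (-(α / s)) * t ^ (-(α / s))))) / 4 := by
    ring
  rw [hEq]
  linarith only [hV2, hEpos, h𝔅V]
end
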